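/- arXiv:1506.05063 — 2 statements merged into one kernel-verified Lean document; each statement's English description precedes it below -/
import Mathlib

section
/- The first Rogers-Ramanujan identity: as formal power series in q, ∑_{n=0}^∞ q^{n²} / ((1-q)(1-q²)···(1-q^n)) = ∏_{n=0}^∞ 1/((1-q^{5n+1})(1-q^{5n+4})). -/
open PowerSeries Finset

namespace RRaux

noncomputable section

abbrev R := PowerSeries ℚ

/-- sign (-1)^j for j : ℤ -/
def sg (j : ℤ) : R := if Even j then 1 else -1

lemma sg_succ (j : ℤ) : sg (j + 1) = - sg j := by
  unfold sg
  by_cases h : Even j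
  · simp [h, Int.even_add_one, not_not]
  · simp [h, Int.even_add_one]

lemma sg_pred (j : ℤ) : sg (j - 1) = - sg j := by
  have := sg_succ (j - 1)
  simp at this
  rw [this]; ring

/-- pentagonal-type exponent (5j²+j)/2 as a natural number -/
def en (j : ℤ) : ℕ := ((5 * j ^ 2 + j) / 2).toNat

lemma en_nonneg (j : ℤ) : (0:ℤ) ≤ 5 * j ^ 2 + j := by nlinarith [sq_nonneg j, sq_nonneg (j+1)]

lemma en_even (j : ℤ) : Even (5 * j ^ 2 + j) := by
  have h : 5 * j ^ 2 + j = 4 * j ^ 2 + j * (j + 1) := by ring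
  rw [h]
  exact (Even.add (even_iff_two_dvd.mpr ⟨2 * j ^ 2, by ring⟩) (Int.even_mul_succ_self j))

lemma two_en (j : ℤ) : 2 * (en j : ℤ) = 5 * j ^ 2 + j := by
  have h0 : (0:ℤ) ≤ (5 * j ^ 2 + j) / 2 := Int.ediv_nonneg (en_nonneg j) (by norm_num)
  have h1 : ((en j : ℤ)) = (5 * j ^ 2 + j) / 2 := Int.toNat_of_nonneg h0
  rw [h1, Int.two_mul_ediv_two_of_even (en_even j)]

lemma en_succ (j : ℤ) : (en (j + 1) : ℤ) = en j + 5 * j + 3 := by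
  have h1 := two_en (j + 1)
  have h2 := two_en j
  have : 5 * (j+1) ^ 2 + (j+1) = (5 * j ^ 2 + j) + (10 * j + 6) := by ring
  omega

lemma en_pred (j : ℤ) : (en (j - 1) : ℤ) = en j - 5 * j + 2 := by
  have := en_succ (j - 1)
  simp at this
  omega

lemma sq_le_en (j : ℤ) : j ^ 2 ≤ (en j : ℤ) := by
  have h := two_en j
  nlinarith [sq_nonneg (j + 1), sq_nonneg j]

/-- `E s n = ∏_{j=1}^n (1 - X^{s·j})` -/
def E (s n : ℕ) : R := ∏ j ∈ range n, (1 - (X : R) ^ (s * (j + 1)))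

lemma constantCoeff_one_sub_X_pow (e : ℕ) (he : 1 ≤ e) :
    constantCoeff (1 - (X : R) ^ e) = 1 := by
  rw [map_sub, map_one, map_pow]
  obtain ⟨e, rfl⟩ := Nat.exists_eq_add_of_le he
  simp [pow_succ]

lemma constantCoeff_E (s n : ℕ) (hs : 1 ≤ s) : constantCoeff (E s n) = 1 := by
  unfold E
  rw [map_prod]
  apply Finset.prod_eq_one
  intro j _
  exact constantCoeff_one_sub_X_pow _ (Nat.one_le_iff_ne_zero.mpr (by simp [Nat.mul_eq_zero]; omega))

lemma E_ne_zero (s n : ℕ) (hs : 1 ≤ s) : (E s n : R) ≠ 0 := by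
  intro h
  have := constantCoeff_E s n hs
  rw [h] at this
  simp at this

lemma E_mul_inv (s n : ℕ) (hs : 1 ≤ s) : E s n * (E s n)⁻¹ = 1 :=
  PowerSeries.mul_inv_cancel _ (by rw [constantCoeff_E s n hs]; norm_num)

lemma E_inv_mul (s n : ℕ) (hs : 1 ≤ s) : (E s n)⁻¹ * E s n = 1 := by
  rw [mul_comm]; exact E_mul_inv s n hs

lemma E_zero (s : ℕ) : E s 0 = 1 := by simp [E]

lemma E_succ (s n : ℕ) : E s (n + 1) = E s n * (1 - (X:R) ^ (s * (n + 1))) := by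
  simp [E, prod_range_succ]

lemma E_ratio (s : ℕ) {k n : ℕ} (h : k ≤ n) :
    E s n = E s k * ∏ j ∈ Ico k n, (1 - (X:R) ^ (s * (j + 1))) := by
  unfold E
  rw [range_eq_Ico, ← Finset.prod_Ico_consecutive _ (Nat.zero_le k) h, range_eq_Ico]

/-- Gaussian binomial (as a power series, via inverses) -/
def gb (s n k : ℕ) : R := E s n * ((E s k)⁻¹ * (E s (n - k))⁻¹)

/-- zero-extended Gaussian binomial with integer lower index -/
def gbz (s n : ℕ) (k : ℤ) : R := if 0 ≤ k ∧ k ≤ n then gb s n k.toNat else 0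

lemma gbz_eq_gb {s n : ℕ} {k : ℤ} (h0 : 0 ≤ k) (h1 : k ≤ n) :
    gbz s n k = gb s n k.toNat := if_pos ⟨h0, h1⟩

lemma gbz_neg {s n : ℕ} {k : ℤ} (h : k < 0) : gbz s n k = 0 :=
  if_neg (by omega)

lemma gbz_gt {s n : ℕ} {k : ℤ} (h : (n:ℤ) < k) : gbz s n k = 0 :=
  if_neg (by omega)

lemma inv_one' : ((1 : R))⁻¹ = 1 := by
  have h := PowerSeries.mul_inv_cancel (1 : R) (by simp)
  simp only [one_mul] at h
  exact h

lemma gb_spec (s : ℕ) {n k : ℕ} (hs : 1 ≤ s) :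
    gb s n k * (E s k * E s (n - k)) = E s n := by
  unfold gb
  have h1 := E_inv_mul s k hs
  have h2 := E_inv_mul s (n - k) hs
  calc E s n * ((E s k)⁻¹ * (E s (n-k))⁻¹) * (E s k * E s (n-k))
      = E s n * (((E s k)⁻¹ * E s k) * ((E s (n-k))⁻¹ * E s (n-k))) := by ring
    _ = E s n := by rw [h1, h2]; ring

lemma gb_zero (s n : ℕ) (hs : 1 ≤ s) : gb s n 0 = 1 := by
  unfold gb
  rw [E_zero, inv_one']
  simp only [Nat.sub_zero, one_mul]
  exact E_mul_inv s n hs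

lemma gb_self (s n : ℕ) (hs : 1 ≤ s) : gb s n n = 1 := by
  unfold gb
  rw [Nat.sub_self, E_zero, inv_one', mul_one]
  exact E_mul_inv s n hs

lemma gbz_zero (s n : ℕ) (hs : 1 ≤ s) : gbz s n 0 = 1 := by
  rw [gbz_eq_gb le_rfl (by exact_mod_cast Nat.zero_le n)]
  simpa using gb_zero s n hs

lemma gbz_self (s n : ℕ) (hs : 1 ≤ s) : gbz s n n = 1 := by
  rw [gbz_eq_gb (Int.ofNat_nonneg n) le_rfl]
  simpa using gb_self s n hs

lemma toNat_natCast' (K : ℕ) : ((K:ℤ)).toNat = K := Int.toNat_natCast K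

lemma gb_pascal1 (s : ℕ) (hs : 1 ≤ s) {n K' : ℕ} (h2 : K' + 1 ≤ n) :
    gb s (n+1) (K'+1) = gb s n K' + (X:R)^(s * (K'+1)) * gb s n (K'+1) := by
  have hU : (E s (K'+1) * E s (n - K') : R) ≠ 0 :=
    mul_ne_zero (E_ne_zero _ _ hs) (E_ne_zero _ _ hs)
  refine mul_right_cancel₀ hU ?_
  have gTop : gb s (n+1) (K'+1) * (E s (K'+1) * E s (n - K')) = E s n * (1 - X^(s*(n+1))) := by
    have h := gb_spec s (n := n+1) (k := K'+1) hs
    rw [show n + 1 - (K'+1) = n - K' from by omega] at h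
    rw [h, E_succ]
  have g1 : gb s n K' * (E s K' * E s (n - K')) = E s n := gb_spec s hs
  have g2 : gb s n (K'+1) * (E s (K'+1) * E s (n - (K'+1))) = E s n := gb_spec s hs
  have eA : E s (K'+1) = E s K' * (1 - (X:R)^(s*(K'+1))) := E_succ s K'
  have eB : E s (n - K') = E s (n - (K'+1)) * (1 - (X:R)^(s*(n-K'))) := by
    have h := E_succ s (n - (K'+1))
    rw [show n - (K'+1) + 1 = n - K' from by omega] at h
    exact h
  have hx : (X:R)^(s*(K'+1)) * (X:R)^(s*(n-K')) = (X:R)^(s*(n+1)) := by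
    rw [← pow_add]
    congr 1
    have : K' + 1 + (n - K') = n + 1 := by omega
    calc s*(K'+1) + s*(n-K') = s * ((K'+1) + (n-K')) := by ring
      _ = s * (n+1) := by rw [this]
  linear_combination gTop - (1 - (X:R)^(s*(K'+1))) * g1 - (X:R)^(s*(K'+1)) * (1 - (X:R)^(s*(n-K'))) * g2
    - (gb s n K' * E s (n - K')) * eA - ((X:R)^(s*(K'+1)) * gb s n (K'+1) * E s (K'+1)) * eB + E s n * hx

lemma gb_pascal2 (s : ℕ) (hs : 1 ≤ s) {n K' : ℕ} (h2 : K' + 1 ≤ n) :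
    gb s (n+1) (K'+1) = (X:R)^(s * (n - K')) * gb s n K' + gb s n (K'+1) := by
  have hU : (E s (K'+1) * E s (n - K') : R) ≠ 0 :=
    mul_ne_zero (E_ne_zero _ _ hs) (E_ne_zero _ _ hs)
  refine mul_right_cancel₀ hU ?_
  have gTop : gb s (n+1) (K'+1) * (E s (K'+1) * E s (n - K')) = E s n * (1 - X^(s*(n+1))) := by
    have h := gb_spec s (n := n+1) (k := K'+1) hs
    rw [show n + 1 - (K'+1) = n - K' from by omega] at h
    rw [h, E_succ]
  have g1 : gb s n K' * (E s K' * E s (n - K')) = E s n := gb_spec s hs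
  have g2 : gb s n (K'+1) * (E s (K'+1) * E s (n - (K'+1))) = E s n := gb_spec s hs
  have eA : E s (K'+1) = E s K' * (1 - (X:R)^(s*(K'+1))) := E_succ s K'
  have eB : E s (n - K') = E s (n - (K'+1)) * (1 - (X:R)^(s*(n-K'))) := by
    have h := E_succ s (n - (K'+1))
    rw [show n - (K'+1) + 1 = n - K' from by omega] at h
    exact h
  have hx : (X:R)^(s*(K'+1)) * (X:R)^(s*(n-K')) = (X:R)^(s*(n+1)) := by
    rw [← pow_add]
    congr 1
    have : K' + 1 + (n - K') = n + 1 := by omega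
    calc s*(K'+1) + s*(n-K') = s * ((K'+1) + (n-K')) := by ring
      _ = s * (n+1) := by rw [this]
  linear_combination gTop - ((X:R)^(s*(n-K')) * gb s n K' * E s (n - K')) * eA
    - (X:R)^(s*(n-K')) * (1 - (X:R)^(s*(K'+1))) * g1
    - (gb s n (K'+1) * E s (K'+1)) * eB - (1 - (X:R)^(s*(n-K'))) * g2 + E s n * hx

/-- q-Pascal I (zero-extended): `[n+1, k] = [n, k-1] + q^k [n, k]`. -/
lemma P1 (s : ℕ) (hs : 1 ≤ s) (n : ℕ) (k : ℤ) :
    gbz s (n+1) k = gbz s n (k-1) + (X:R)^(s * k.toNat) * gbz s n k := by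
  rcases lt_trichotomy k 0 with hk | hk | hk
  · rw [gbz_neg hk, gbz_neg (by omega : k - 1 < 0), gbz_neg hk, mul_zero, add_zero]
  · subst hk
    rw [gbz_zero _ _ hs, gbz_neg (by norm_num), gbz_zero _ _ hs]
    norm_num
  · lift k to ℕ using (by omega) with K
    have hK1 : 1 ≤ K := by exact_mod_cast hk
    obtain ⟨K', rfl⟩ : ∃ K', K = K' + 1 := ⟨K - 1, by omega⟩
    have hcast : ((K' + 1 : ℕ) : ℤ) - 1 = (K' : ℤ) := by push_cast; ring
    by_cases hKn : K' + 1 ≤ n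
    · rw [gbz_eq_gb (by positivity) (by exact_mod_cast Nat.le_succ_of_le hKn), hcast,
        gbz_eq_gb (by positivity) (by exact_mod_cast Nat.le_of_succ_le hKn),
        gbz_eq_gb (by positivity) (by exact_mod_cast hKn),
        toNat_natCast', toNat_natCast']
      exact gb_pascal1 s hs hKn
    · by_cases hK2 : K' + 1 = n + 1
      · rw [show K' = n from by omega] at hcast ⊢
        rw [hcast, gbz_self _ _ hs, gbz_self _ _ hs, gbz_gt (by exact_mod_cast Nat.lt_succ_self n),
          mul_zero, add_zero]
      · rw [gbz_gt (by exact_mod_cast (by omega : n + 1 < K' + 1)), hcast,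
          gbz_gt (by exact_mod_cast (by omega : n < K')),
          gbz_gt (by exact_mod_cast (by omega : n < K' + 1)), mul_zero, add_zero]

/-- q-Pascal II (zero-extended): `[n+1, k] = q^{n+1-k} [n, k-1] + [n, k]`. -/
lemma P2 (s : ℕ) (hs : 1 ≤ s) (n : ℕ) (k : ℤ) :
    gbz s (n+1) k = (X:R)^(s * ((n:ℤ) + 1 - k).toNat) * gbz s n (k-1) + gbz s n k := by
  rcases lt_trichotomy k 0 with hk | hk | hk
  · rw [gbz_neg hk, gbz_neg (by omega : k - 1 < 0), gbz_neg hk, mul_zero, zero_add]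
  · subst hk
    rw [gbz_zero _ _ hs, gbz_neg (by norm_num), gbz_zero _ _ hs]
    norm_num
  · lift k to ℕ using (by omega) with K
    have hK1 : 1 ≤ K := by exact_mod_cast hk
    obtain ⟨K', rfl⟩ : ∃ K', K = K' + 1 := ⟨K - 1, by omega⟩
    have hcast : ((K' + 1 : ℕ) : ℤ) - 1 = (K' : ℤ) := by push_cast; ring
    by_cases hKn : K' + 1 ≤ n
    · have htn : ((n:ℤ) + 1 - ((K' + 1 : ℕ) : ℤ)).toNat = n - K' := by
        push_cast; omega
      rw [gbz_eq_gb (by positivity) (by exact_mod_cast Nat.le_succ_of_le hKn), hcast,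
        gbz_eq_gb (by positivity) (by exact_mod_cast Nat.le_of_succ_le hKn),
        gbz_eq_gb (by positivity) (by exact_mod_cast hKn),
        toNat_natCast', htn]
      exact gb_pascal2 s hs hKn
    · by_cases hK2 : K' + 1 = n + 1
      · rw [show K' = n from by omega] at hcast ⊢
        have htn : ((n:ℤ) + 1 - ((n + 1 : ℕ) : ℤ)).toNat = 0 := by push_cast; omega
        rw [hcast, gbz_self _ _ hs, gbz_self _ _ hs, gbz_gt (by exact_mod_cast Nat.lt_succ_self n),
          htn]
        simp
      · rw [gbz_gt (by exact_mod_cast (by omega : n + 1 < K' + 1)), hcast,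
          gbz_gt (by exact_mod_cast (by omega : n < K')),
          gbz_gt (by exact_mod_cast (by omega : n < K' + 1)), mul_zero, zero_add]



/-! ### congruence modulo `X^k` -/

def MD (k : ℕ) (a b : R) : Prop := (X:R) ^ k ∣ (a - b)

lemma MD.rfl {k : ℕ} {a : R} : MD k a a := by simp [MD]

lemma MD.symm {k : ℕ} {a b : R} (h : MD k a b) : MD k b a := by
  have := h.neg_right
  simpa [MD, neg_sub] using (dvd_neg.mpr h)

lemma MD.trans {k : ℕ} {a b c : R} (h1 : MD k a b) (h2 : MD k b c) : MD k a c := by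
  have := dvd_add h1 h2
  simpa [MD] using this

lemma MD.add {k : ℕ} {a b c d : R} (h1 : MD k a b) (h2 : MD k c d) : MD k (a+c) (b+d) := by
  have := dvd_add h1 h2
  unfold MD at *
  convert this using 1
  ring

lemma MD.mul {k : ℕ} {a b c d : R} (h1 : MD k a b) (h2 : MD k c d) : MD k (a*c) (b*d) := by
  unfold MD at *
  have : a * c - b * d = (a - b) * c + b * (c - d) := by ring
  rw [this]
  exact dvd_add (h1.mul_right c) (h2.mul_left b)

lemma MD.mul_left {k : ℕ} (c : R) {a b : R} (h : MD k a b) : MD k (c*a) (c*b) :=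
  MD.mul MD.rfl h

lemma MD.sum {k : ℕ} {ι : Type*} {s : Finset ι} {f g : ι → R}
    (h : ∀ i ∈ s, MD k (f i) (g i)) : MD k (∑ i ∈ s, f i) (∑ i ∈ s, g i) := by
  unfold MD at *
  rw [← Finset.sum_sub_distrib]
  exact Finset.dvd_sum h

lemma MD.prod_one {k : ℕ} {ι : Type*} {s : Finset ι} {f : ι → R}
    (h : ∀ i ∈ s, MD k (f i) 1) : MD k (∏ i ∈ s, f i) 1 := by
  classical
  refine Finset.prod_induction f (fun g => MD k g 1) (fun a b ha hb => ?_) (by simp [MD]) h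
  simpa using ha.mul hb

lemma MD_zero_left {k e : ℕ} (a : R) (h : k ≤ e) : MD k ((X:R)^e * a) 0 := by
  unfold MD
  rw [sub_zero]
  exact Dvd.dvd.mul_right (pow_dvd_pow _ h) a

lemma MD_one_sub {k e : ℕ} (h : k ≤ e) : MD k (1 - (X:R)^e) 1 := by
  unfold MD
  have : (1 - (X:R)^e) - 1 = -(X^e) := by ring
  rw [this]
  exact (dvd_neg.mpr (pow_dvd_pow _ h))

lemma MD.weaken {k k' : ℕ} {a b : R} (h : k' ≤ k) (hm : MD k a b) : MD k' a b :=
  dvd_trans (pow_dvd_pow _ h) hm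

lemma MD_X_pow_mul {k e : ℕ} {a b : R} (h : MD k a b) : MD (e + k) ((X:R)^e * a) ((X:R)^e * b) := by
  unfold MD at *
  have : (X:R)^e * a - X^e * b = X^e * (a - b) := by ring
  rw [this, pow_add]
  exact mul_dvd_mul_left _ h

lemma MD_cancel {k : ℕ} {U a b : R} (hU : constantCoeff U ≠ 0)
    (h : MD k (U * a) (U * b)) : MD k a b := by
  unfold MD at *
  have hinv : U⁻¹ * U = 1 := by
    rw [mul_comm]; exact PowerSeries.mul_inv_cancel _ hU
  have : a - b = U⁻¹ * (U * a - U * b) := by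
    calc a - b = (U⁻¹ * U) * a - (U⁻¹ * U) * b := by rw [hinv]; ring
      _ = U⁻¹ * (U * a - U * b) := by ring
  rw [this]
  exact Dvd.dvd.mul_left h _

lemma MD.coeff_eq {d : ℕ} {a b : R} (h : MD (d+1) a b) : coeff d a = coeff d b := by
  unfold MD at h
  rw [PowerSeries.X_pow_dvd_iff] at h
  have := h d (by omega)
  rw [map_sub] at this
  linarith

/-! ### truncation lemmas -/

lemma MD_E {s a b : ℕ} (hs : 1 ≤ s) (hab : a ≤ b) : MD (s*(a+1)) (E s b) (E s a) := by
  unfold MD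
  rw [E_ratio s hab]
  have h1 : (X:R)^(s*(a+1)) ∣ (∏ j ∈ Ico a b, (1 - (X:R) ^ (s * (j + 1)))) - 1 := by
    have := MD.prod_one (k := s*(a+1)) (s := Ico a b)
      (f := fun j => (1 - (X:R) ^ (s * (j + 1)))) ?_
    · exact this
    · intro j hj
      apply MD_one_sub
      have := (Finset.mem_Ico.mp hj).1
      exact Nat.mul_le_mul_left s (by omega)
  have : E s a * ∏ j ∈ Ico a b, (1 - (X:R) ^ (s * (j + 1))) - E s a
      = E s a * ((∏ j ∈ Ico a b, (1 - (X:R) ^ (s * (j + 1)))) - 1) := by ring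
  rw [this]
  exact h1.mul_left _

lemma gb_trunc {s n h D : ℕ} (hs : 1 ≤ s) (h1 : D ≤ h) (h2 : h + D ≤ n) :
    MD D (gb s n h) ((E s D)⁻¹) := by
  have hcc : constantCoeff (E s h * E s (n - h) * E s D) ≠ 0 := by
    rw [map_mul, map_mul, constantCoeff_E _ _ hs, constantCoeff_E _ _ hs,
      constantCoeff_E _ _ hs]
    norm_num
  apply MD_cancel hcc
  have e1 : E s h * E s (n-h) * E s D * gb s n h = E s n * E s D := by
    have := gb_spec s (n := n) (k := h) hs
    calc E s h * E s (n-h) * E s D * gb s n h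
        = (gb s n h * (E s h * E s (n - h))) * E s D := by ring
      _ = E s n * E s D := by rw [this]
  have e2 : E s h * E s (n-h) * E s D * (E s D)⁻¹ = E s h * E s (n-h) := by
    rw [mul_assoc, E_mul_inv _ _ hs, mul_one]
  rw [e1, e2]
  have m1 : MD D (E s n) (E s h) := (MD_E hs (by omega)).weaken
    (by calc D ≤ h + 1 := by omega
          _ ≤ s * (h+1) := Nat.le_mul_of_pos_left _ (by omega))
  have m2 : MD D (E s D) (E s (n - h)) := ((MD_E hs (by omega)).symm).weaken
    (by calc D ≤ D + 1 := by omega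
          _ ≤ s * (D+1) := Nat.le_mul_of_pos_left _ (by omega))
  exact m1.mul m2



/-! ### the three finite sums -/

/-- Schur polynomial, sum side: `∑ q^{k²} [m-k; k]` -/
def Sp (m : ℕ) : R := ∑ k ∈ range (m+1), (X:R)^(k^2) * gbz 1 (m - k) (k:ℤ)

def hT (m : ℕ) (j : ℤ) : ℤ := ((m:ℤ) - 5*j)/2

/-- Schur polynomial term, pentagonal side -/
def Tt (m : ℕ) (j : ℤ) : R := sg j * (X:R)^(en j) * gbz 1 m (hT m j)

def Tp (m : ℕ) : R := ∑ j ∈ Icc (-(m:ℤ)) (m:ℤ), Tt m j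

/-- Jacobi triple product term -/
def Vt (N : ℕ) (j : ℤ) : R := sg j * (X:R)^(en j) * gbz 5 (2*N) ((N:ℤ) + j)

def Wp (N : ℕ) : R := ∑ j ∈ Icc (-(N:ℤ)) (N:ℤ), Vt N j

/-- truncated pentagonal-type theta sum -/
def Pp (L : ℕ) : R := ∑ j ∈ Icc (-(L:ℤ)) (L:ℤ), sg j * (X:R)^(en j)

lemma Tt_support {m : ℕ} {j : ℤ} (h : j < -(m:ℤ) ∨ (m:ℤ) < j) : Tt m j = 0 := by
  unfold Tt
  rcases h with h | h
  · rw [gbz_gt (by unfold hT; omega), mul_zero]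
  · rw [gbz_neg (by unfold hT; omega), mul_zero]

lemma Vt_support {N : ℕ} {j : ℤ} (h : j < -(N:ℤ) ∨ (N:ℤ) < j) : Vt N j = 0 := by
  unfold Vt
  rcases h with h | h
  · rw [gbz_neg (by omega), mul_zero]
  · rw [gbz_gt (by push_cast; omega), mul_zero]

lemma Tp_ext {m : ℕ} {A B : ℤ} (hA : A ≤ -(m:ℤ)) (hB : (m:ℤ) ≤ B) :
    Tp m = ∑ j ∈ Icc A B, Tt m j := by
  apply Finset.sum_subset
  · intro j hj
    simp only [Finset.mem_Icc] at hj ⊢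
    omega
  · intro j hj hj'
    simp only [Finset.mem_Icc] at hj hj'
    exact Tt_support (by omega)

lemma Wp_ext {N : ℕ} {A B : ℤ} (hA : A ≤ -(N:ℤ)) (hB : (N:ℤ) ≤ B) :
    Wp N = ∑ j ∈ Icc A B, Vt N j := by
  apply Finset.sum_subset
  · intro j hj
    simp only [Finset.mem_Icc] at hj ⊢
    omega
  · intro j hj hj'
    simp only [Finset.mem_Icc] at hj hj'
    exact Vt_support (by omega)

/-! ### recursion for Sp -/

lemma Sp_rec (m : ℕ) : Sp (m+2) = Sp (m+1) + (X:R)^(m+1) * Sp m := by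
  have hext1 : Sp (m+1) = ∑ k ∈ range (m+3), (X:R)^(k^2) * gbz 1 (m+1-k) (k:ℤ) := by
    unfold Sp
    apply Finset.sum_subset
    · intro k hk; simp only [Finset.mem_range] at *; omega
    · intro k hk hk'
      simp only [Finset.mem_range] at hk hk'
      have hz : gbz 1 (m+1-k) (k:ℤ) = 0 := gbz_gt (by
        have : m + 1 - k = 0 := by omega
        rw [this]; push_cast; omega)
      rw [hz, mul_zero]
  have hext0 : Sp m = ∑ k ∈ range (m+2), (X:R)^(k^2) * gbz 1 (m-k) (k:ℤ) := by
    unfold Sp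
    apply Finset.sum_subset
    · intro k hk; simp only [Finset.mem_range] at *; omega
    · intro k hk hk'
      simp only [Finset.mem_range] at hk hk'
      have hz : gbz 1 (m-k) (k:ℤ) = 0 := gbz_gt (by
        have : m - k = 0 := by omega
        rw [this]; push_cast; omega)
      rw [hz, mul_zero]
  have key : ∀ k ∈ range (m+3),
      (X:R)^(k^2) * gbz 1 (m+2-k) (k:ℤ) - (X:R)^(k^2) * gbz 1 (m+1-k) (k:ℤ)
      = (if h : k = 0 then 0 else (X:R)^(m+1) * ((X:R)^((k-1)^2) * gbz 1 (m-(k-1)) ((k:ℤ)-1))) := by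
    intro k hk
    simp only [Finset.mem_range] at hk
    by_cases hk0 : k = 0
    · subst hk0
      rw [dif_pos rfl]
      rw [show m + 2 - 0 = m + 2 from rfl, show m + 1 - 0 = m + 1 from rfl,
        show ((0:ℕ):ℤ) = (0:ℤ) from rfl,
        gbz_zero _ _ le_rfl, gbz_zero _ _ le_rfl]
      ring
    · rw [dif_neg hk0]
      obtain ⟨k', rfl⟩ : ∃ k', k = k' + 1 := ⟨k - 1, by omega⟩
      by_cases hbig : k' + 1 ≤ m + 1
      case neg =>
        have hc3 : k' + 1 - 1 = k' := by omega
        have he3 : m - k' = 0 := by omega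
        have he1 : m + 2 - (k'+1) = 0 := by omega
        have he2 : m + 1 - (k'+1) = 0 := by omega
        rw [hc3, he3, he1, he2, gbz_gt (show ((0:ℕ):ℤ) < (↑(k'+1) - 1 : ℤ) by push_cast; omega)]
        ring
      have hP2 := P2 1 le_rfl (m+1-(k'+1)) ((k'+1 : ℕ) : ℤ)
      rw [show m+1-(k'+1)+1 = m+2-(k'+1) from by omega] at hP2
      rw [hP2]
      have hc1 : ((k'+1 : ℕ) : ℤ) - 1 = (k' : ℤ) := by push_cast; ring
      have hc2 : m + 1 - (k'+1) = m - k' := by omega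
      have hc3 : k' + 1 - 1 = k' := by omega
      rw [hc1, hc2, hc3]
      by_cases hkm : 2*k' ≤ m
      · have he : (((m - k' : ℕ)):ℤ) + 1 - ((k'+1 : ℕ) : ℤ) = ((m - 2*k' : ℕ) : ℤ) := by
          push_cast; omega
        rw [he, Int.toNat_natCast]
        have hpow : (X:R)^((k'+1)^2) * (X:R)^(1 * (m - 2*k')) = (X:R)^(m+1) * (X:R)^(k'^2) := by
          rw [← pow_add, ← pow_add]
          congr 1
          have h1 : (k'+1)^2 = k'^2 + 2*k' + 1 := by ring
          omega
        calc (X:R)^((k'+1)^2) * ((X:R)^(1 * (m - 2*k')) * gbz 1 (m-k') (k':ℤ) + gbz 1 (m-k') ((k'+1 : ℕ):ℤ))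
              - (X:R)^((k'+1)^2) * gbz 1 (m-k') ((k'+1 : ℕ):ℤ)
            = ((X:R)^((k'+1)^2) * (X:R)^(1 * (m - 2*k'))) * gbz 1 (m-k') (k':ℤ) := by ring
          _ = (X:R)^(m+1) * ((X:R)^(k'^2) * gbz 1 (m-k') (k':ℤ)) := by rw [hpow]; ring
      · have hz : gbz 1 (m-k') (k':ℤ) = 0 :=
          gbz_gt (by exact_mod_cast (show m - k' < k' by omega))
        rw [hz]
        ring
  -- now assemble
  rw [show Sp (m+2) = ∑ k ∈ range (m+3), (X:R)^(k^2) * gbz 1 (m+2-k) (k:ℤ) from rfl,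
    hext1, hext0]
  have hsum : (∑ k ∈ range (m+3), (X:R)^(k^2) * gbz 1 (m+2-k) (k:ℤ))
      - (∑ k ∈ range (m+3), (X:R)^(k^2) * gbz 1 (m+1-k) (k:ℤ))
      = ∑ k ∈ range (m+3), ((X:R)^(k^2) * gbz 1 (m+2-k) (k:ℤ) - (X:R)^(k^2) * gbz 1 (m+1-k) (k:ℤ)) := by
    rw [Finset.sum_sub_distrib]
  have hsum2 : ∑ k ∈ range (m+3), ((X:R)^(k^2) * gbz 1 (m+2-k) (k:ℤ) - (X:R)^(k^2) * gbz 1 (m+1-k) (k:ℤ))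
      = ∑ k ∈ range (m+3), (if h : k = 0 then 0 else (X:R)^(m+1) * ((X:R)^((k-1)^2) * gbz 1 (m-(k-1)) ((k:ℤ)-1))) :=
    Finset.sum_congr rfl key
  have hsum3 : ∑ k ∈ range (m+3), (if h : k = 0 then (0:R) else (X:R)^(m+1) * ((X:R)^((k-1)^2) * gbz 1 (m-(k-1)) ((k:ℤ)-1)))
      = ∑ k ∈ range (m+2), (X:R)^(m+1) * ((X:R)^(k^2) * gbz 1 (m-k) (k:ℤ)) := by
    rw [Finset.sum_range_succ' _ (m+2), dif_pos rfl, add_zero]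
    apply Finset.sum_congr rfl
    intro k _
    rw [dif_neg (by omega : ¬(k+1 = 0))]
    have hc : ((k+1:ℕ):ℤ) - 1 = (k:ℤ) := by push_cast; ring
    rw [show k + 1 - 1 = k from by omega, hc]
  have h := hsum.trans (hsum2.trans hsum3)
  rw [Finset.mul_sum]
  linear_combination h

/-! ### recursion for Tp (Schur's induction) -/

lemma core_even (m' : ℕ) (h : ℤ) :
    gbz 1 (m'+2) h - gbz 1 (m'+1) (h-1) - (X:R)^(m'+1) * gbz 1 m' (h-1)
      = (X:R)^(h.toNat) * gbz 1 m' h := by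
  rcases lt_trichotomy h 0 with hh | hh | hh
  · rw [gbz_neg hh, gbz_neg (by omega : h - 1 < 0), gbz_neg (by omega : h - 1 < 0), gbz_neg hh]
    ring
  · subst hh
    rw [gbz_zero _ _ le_rfl, gbz_neg (by norm_num), gbz_neg (by norm_num),
      gbz_zero _ _ le_rfl]
    simp
  · by_cases hm : h ≤ (m':ℤ) + 1
    · have hP1 := P1 1 le_rfl (m'+1) h
      have hP2 := P2 1 le_rfl m' h
      simp only [one_mul] at hP1 hP2
      rw [hP1, hP2]
      have hx : (X:R)^(h.toNat) * (X:R)^(((m':ℤ) + 1 - h).toNat) = (X:R)^(m'+1) := by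
        rw [← pow_add]; congr 1; omega
      linear_combination (gbz 1 m' (h-1)) * hx
    · by_cases hm2 : h = (m':ℤ) + 2
      · subst hm2
        have c2 : ((m':ℤ) + 2) = (((m'+2 : ℕ)):ℤ) := by push_cast; ring
        have c1 : ((m':ℤ) + 2) - 1 = (((m'+1 : ℕ)):ℤ) := by push_cast; ring
        rw [c1, gbz_self _ _ le_rfl]
        rw [show gbz 1 (m'+2) ((m':ℤ) + 2) = 1 from by rw [c2]; exact gbz_self _ _ le_rfl]
        rw [show gbz 1 m' (((m'+1 : ℕ)):ℤ) = 0 from gbz_gt (by push_cast; omega)]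
        rw [show gbz 1 m' ((m':ℤ) + 2) = 0 from gbz_gt (by push_cast; omega)]
        ring
      · rw [gbz_gt (by push_cast; omega : ((m'+2:ℕ):ℤ) < h),
          gbz_gt (by push_cast; omega : ((m'+1:ℕ):ℤ) < h - 1),
          gbz_gt (by push_cast; omega : ((m':ℕ):ℤ) < h - 1),
          gbz_gt (by push_cast; omega : ((m':ℕ):ℤ) < h)]
        ring

lemma core_odd (m' : ℕ) (h : ℤ) :
    gbz 1 (m'+2) h - gbz 1 (m'+1) h - (X:R)^(m'+1) * gbz 1 m' (h-1)
      = (X:R)^(((m':ℤ) + 2 - h).toNat) * gbz 1 m' (h-2) := by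
  rcases lt_trichotomy h 0 with hh | hh | hh
  · rw [gbz_neg hh, gbz_neg hh, gbz_neg (by omega : h - 1 < 0), gbz_neg (by omega : h - 2 < 0)]
    ring
  · subst hh
    rw [gbz_zero _ _ le_rfl, gbz_zero _ _ le_rfl, gbz_neg (by norm_num),
      gbz_neg (by norm_num)]
    ring
  · by_cases hm : h ≤ (m':ℤ) + 2
    · have hP2 := P2 1 le_rfl (m'+1) h
      rw [show ((m'+1:ℕ):ℤ) + 1 - h = (m':ℤ) + 2 - h from by push_cast; ring] at hP2
      have hP1 := P1 1 le_rfl m' (h-1)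
      rw [show h - 1 - 1 = h - 2 from by ring] at hP1
      simp only [one_mul] at hP2 hP1
      rw [hP2, hP1]
      have hx : (X:R)^(((m':ℤ) + 2 - h).toNat) * (X:R)^((h-1).toNat) = (X:R)^(m'+1) := by
        rw [← pow_add]; congr 1; omega
      linear_combination (gbz 1 m' (h-1)) * hx
    · rw [gbz_gt (by push_cast; omega : ((m'+2:ℕ):ℤ) < h),
        gbz_gt (by push_cast; omega : ((m'+1:ℕ):ℤ) < h),
        gbz_gt (by push_cast; omega : ((m':ℕ):ℤ) < h - 1),
        gbz_gt (by push_cast; omega : ((m':ℕ):ℤ) < h - 2)]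
      ring

def RevT (m' : ℕ) (j : ℤ) : R :=
  sg j * (X:R)^(en j) * ((X:R)^((hT (m'+2) j).toNat) * gbz 1 m' (hT (m'+2) j))

def RodT (m' : ℕ) (j : ℤ) : R :=
  sg j * (X:R)^(en j) *
    ((X:R)^(((m':ℤ) + 2 - hT (m'+2) j).toNat) * gbz 1 m' (hT (m'+2) j - 2))

lemma perj (m' : ℕ) (j : ℤ) :
    Tt (m'+2) j - Tt (m'+1) j - (X:R)^(m'+1) * Tt m' j
      = if Even ((m'+2:ℤ) + j) then RevT m' j else RodT m' j := by
  by_cases hpar : Even ((m'+2:ℤ) + j)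
  · rw [if_pos hpar]
    obtain ⟨r, hr⟩ := hpar
    set h := hT (m'+2) j with hhdef
    have h2 : 2*h = ((m'+2:ℕ):ℤ) - 5*j := by
      rw [hhdef]; unfold hT; push_cast at hr ⊢; omega
    have e1 : hT (m'+1) j = h - 1 := by
      rw [hhdef]; unfold hT; push_cast at h2 ⊢; omega
    have e0 : hT m' j = h - 1 := by
      rw [hhdef]; unfold hT; push_cast at h2 ⊢; omega
    unfold Tt RevT
    rw [e1, e0, ← hhdef]
    linear_combination (sg j * (X:R)^(en j)) * core_even m' h
  · rw [if_neg hpar]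
    rw [Int.not_even_iff_odd] at hpar
    obtain ⟨r, hr⟩ := hpar
    set h := hT (m'+2) j with hhdef
    have h2 : 2*h + 1 = ((m'+2:ℕ):ℤ) - 5*j := by
      rw [hhdef]; unfold hT; push_cast at hr ⊢; omega
    have e1 : hT (m'+1) j = h := by
      rw [hhdef]; unfold hT; push_cast at h2 ⊢; omega
    have e0 : hT m' j = h - 1 := by
      rw [hhdef]; unfold hT; push_cast at h2 ⊢; omega
    unfold Tt RodT
    rw [e1, e0, ← hhdef]
    linear_combination (sg j * (X:R)^(en j)) * core_odd m' h

lemma pair (m' : ℕ) (j : ℤ) (hpar : Even ((m'+2:ℤ) + j)) :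
    RevT m' j + RodT m' (j-1) = 0 := by
  obtain ⟨r, hr⟩ := hpar
  set h := hT (m'+2) j with hhdef
  have h2 : 2*h = ((m'+2:ℕ):ℤ) - 5*j := by
    rw [hhdef]; unfold hT; push_cast at hr ⊢; omega
  have e : hT (m'+2) (j-1) = h + 2 := by
    rw [hhdef]; unfold hT; push_cast at h2 ⊢; omega
  unfold RevT RodT
  rw [e, ← hhdef, show h + 2 - 2 = h from by ring,
    show (m':ℤ) + 2 - (h+2) = (m':ℤ) - h from by ring, sg_pred]
  by_cases hrange : 0 ≤ h ∧ h ≤ (m':ℤ)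
  · have hp := en_pred j
    have hexp : en j + h.toNat = en (j-1) + ((m':ℤ) - h).toNat := by
      push_cast at h2
      omega
    have hX : (X:R)^(en j) * (X:R)^(h.toNat)
        = (X:R)^(en (j-1)) * (X:R)^(((m':ℤ) - h).toNat) := by
      rw [← pow_add, ← pow_add, hexp]
    linear_combination (sg j * gbz 1 m' h) * hX
  · have hz : gbz 1 m' h = 0 := by
      rcases not_and_or.mp hrange with h1 | h1
      · exact gbz_neg (by omega)
      · exact gbz_gt (by omega)
    rw [hz]
    ring

lemma Tp_rec (m' : ℕ) : Tp (m'+2) = Tp (m'+1) + (X:R)^(m'+1) * Tp m' := by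
  set B : Finset ℤ := Icc (-(m':ℤ)-3) ((m':ℤ)+2) with hB
  have hm2 : Tp (m'+2) = ∑ j ∈ B, Tt (m'+2) j := Tp_ext (by push_cast; omega) (by push_cast; omega)
  have hm1 : Tp (m'+1) = ∑ j ∈ B, Tt (m'+1) j := Tp_ext (by push_cast; omega) (by push_cast; omega)
  have hm0 : Tp m' = ∑ j ∈ B, Tt m' j := Tp_ext (by push_cast; omega) (by push_cast; omega)
  rw [hm2, hm1, hm0, Finset.mul_sum, ← sub_eq_zero]
  have hstep : (∑ j ∈ B, Tt (m'+2) j) - ((∑ j ∈ B, Tt (m'+1) j) + ∑ j ∈ B, (X:R)^(m'+1) * Tt m' j)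
      = ∑ j ∈ B, (Tt (m'+2) j - Tt (m'+1) j - (X:R)^(m'+1) * Tt m' j) := by
    rw [Finset.sum_sub_distrib, Finset.sum_sub_distrib]
    ring
  rw [hstep]
  rw [Finset.sum_congr rfl (fun j _ => perj m' j)]
  rw [Finset.sum_ite]
  have hbij : ∑ j ∈ B.filter (fun j => ¬ Even ((m'+2:ℤ) + j)), RodT m' j
      = ∑ j ∈ B.filter (fun j => Even ((m'+2:ℤ) + j)), RodT m' (j - 1) := by
    refine Finset.sum_nbij' (fun j => j + 1) (fun j => j - 1) ?_ ?_ ?_ ?_ ?_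
    · intro a ha
      simp only [Finset.mem_filter, hB, Finset.mem_Icc] at ha ⊢
      obtain ⟨⟨ha1, ha2⟩, hae⟩ := ha
      rw [Int.not_even_iff_odd] at hae
      obtain ⟨r, hr⟩ := hae
      exact ⟨⟨by omega, by omega⟩, ⟨r + 1, by omega⟩⟩
    · intro a ha
      simp only [Finset.mem_filter, hB, Finset.mem_Icc] at ha ⊢
      obtain ⟨⟨ha1, ha2⟩, hae⟩ := ha
      obtain ⟨r, hr⟩ := hae
      refine ⟨⟨by omega, by omega⟩, ?_⟩
      rw [Int.not_even_iff_odd]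
      exact ⟨r - 1, by omega⟩
    · intro a _; ring
    · intro a _; ring
    · intro a _; congr 1; ring
  rw [hbij, ← Finset.sum_add_distrib]
  apply Finset.sum_eq_zero
  intro j hj
  simp only [Finset.mem_filter] at hj
  exact pair m' j hj.2

lemma Sp_eq_Tp (m : ℕ) : Sp m = Tp m := by
  induction m using Nat.strong_induction_on with
  | _ m ih =>
    match m with
    | 0 =>
      have hS : Sp 0 = 1 := by
        unfold Sp
        rw [Finset.sum_range_one]
        rw [show ((0:ℕ):ℤ) = (0:ℤ) from rfl, gbz_zero _ _ le_rfl]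
        simp
      have hT0 : Tp 0 = 1 := by
        unfold Tp
        rw [show (-(0:ℕ):ℤ) = (0:ℤ) from by norm_num, show ((0:ℕ):ℤ) = (0:ℤ) from rfl]
        rw [Finset.Icc_self, Finset.sum_singleton]
        unfold Tt hT en sg
        norm_num
        rw [gbz_zero _ _ le_rfl]
      rw [hS, hT0]
    | 1 =>
      have hS : Sp 1 = 1 := by
        unfold Sp
        rw [Finset.sum_range_succ, Finset.sum_range_one]
        rw [show ((0:ℕ):ℤ) = (0:ℤ) from rfl, gbz_zero _ _ le_rfl]
        rw [show (1:ℕ) - 1 = 0 from rfl, gbz_gt (by norm_num : ((0:ℕ):ℤ) < ((1:ℕ):ℤ))]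
        simp
      have hT1 : Tp 1 = 1 := by
        unfold Tp
        have hset : Icc (-(1:ℕ):ℤ) ((1:ℕ):ℤ) = {-1, 0, 1} := by decide
        rw [hset]
        rw [Finset.sum_insert (by decide), Finset.sum_insert (by decide), Finset.sum_singleton]
        have t1 : Tt 1 (-1) = 0 := by
          unfold Tt
          rw [show hT 1 (-1) = 3 from by unfold hT; decide]
          rw [gbz_gt (by norm_num)]
          ring
        have t2 : Tt 1 0 = 1 := by
          unfold Tt hT en sg
          norm_num
          rw [gbz_zero _ _ le_rfl]
        have t3 : Tt 1 1 = 0 := by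
          unfold Tt
          rw [show hT 1 1 = -2 from by unfold hT; decide]
          rw [gbz_neg (by norm_num)]
          ring
        rw [t1, t2, t3]
        ring
      rw [hS, hT1]
    | (m'+2) =>
      rw [Sp_rec, Tp_rec, ih (m'+1) (by omega), ih m' (by omega)]



/-! ### the (specialized) Jacobi triple product, finite form -/

def A3 (N : ℕ) (j : ℤ) : R :=
  sg j * (X:R)^(en j) * ((X:R)^(5 * ((N:ℤ)+1-j).toNat) * gbz 5 (2*N) ((N:ℤ)+j-1))

def A4 (N : ℕ) (j : ℤ) : R :=
  sg j * (X:R)^(en j) * ((X:R)^(5 * ((N:ℤ)+1+j).toNat) * gbz 5 (2*N) ((N:ℤ)+j+1))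

lemma dagger (N : ℕ) (j : ℤ) (hj1 : -(N:ℤ)-2 ≤ j) (hj2 : j ≤ (N:ℤ)+2) :
    Vt (N+1) j = Vt N j + (X:R)^(5*(2*N+1)) * Vt N j + A3 N j + A4 N j := by
  have hVN1 : Vt (N+1) j = sg j * (X:R)^(en j) * gbz 5 (2*N+2) ((N:ℤ)+j+1) := by
    unfold Vt
    rw [show 2*(N+1) = 2*N+2 from by ring,
      show ((N+1:ℕ):ℤ) + j = (N:ℤ)+j+1 from by push_cast; ring]
  rw [hVN1]
  unfold Vt A3 A4
  rcases lt_trichotomy ((N:ℤ)+j) (-1) with ha | ha | ha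
  · rw [gbz_neg (by omega), gbz_neg (by omega), gbz_neg (by omega), gbz_neg (by omega)]
    ring
  · rw [show (N:ℤ)+j+1 = 0 from by omega, gbz_zero _ _ (by norm_num),
      gbz_neg (by omega : (N:ℤ)+j < 0), gbz_neg (by omega : (N:ℤ)+j-1 < 0),
      gbz_zero _ _ (by norm_num),
      show 5 * (((N:ℤ)+1+j).toNat) = 0 from by omega]
    ring
  · by_cases hc : (N:ℤ)+j ≤ 2*N
    · -- main case  0 ≤ a ≤ 2N
      have hP1 := P1 5 (by norm_num) (2*N+1) ((N:ℤ)+j+1)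
      rw [show (N:ℤ)+j+1-1 = (N:ℤ)+j from by ring,
        show 2*N+1+1 = 2*N+2 from by omega] at hP1
      have hP2a := P2 5 (by norm_num) (2*N) ((N:ℤ)+j)
      rw [show ((2*N:ℕ):ℤ) + 1 - ((N:ℤ)+j) = (N:ℤ)+1-j from by push_cast; ring] at hP2a
      have hP2b := P2 5 (by norm_num) (2*N) ((N:ℤ)+j+1)
      rw [show ((2*N:ℕ):ℤ) + 1 - ((N:ℤ)+j+1) = 2*(N:ℤ)-((N:ℤ)+j) from by push_cast; ring,
        show (N:ℤ)+j+1-1 = (N:ℤ)+j from by ring] at hP2b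
      have hx1 : (X:R)^(5 * (((N:ℤ)+j+1)).toNat) * (X:R)^(5 * ((2*(N:ℤ)-((N:ℤ)+j))).toNat)
          = (X:R)^(5*(2*N+1)) := by
        rw [← pow_add]; congr 1; omega
      have hx3 : 5 * (((N:ℤ)+j+1)).toNat = 5 * (((N:ℤ)+1+j)).toNat := by
        congr 2; ring
      rw [hx3] at hP1 hx1
      rw [hP1, hP2a, hP2b]
      linear_combination (sg j * (X:R)^(en j) * gbz 5 (2*N) ((N:ℤ)+j)) * hx1
    · by_cases hd : (N:ℤ)+j = 2*N+1
      · rw [show (N:ℤ)+j+1 = ((2*N+2 : ℕ):ℤ) from by push_cast; omega,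
          gbz_self _ _ (by norm_num)]
        rw [show (N:ℤ)+j-1 = ((2*N:ℕ):ℤ) from by push_cast; omega,
          gbz_self _ _ (by norm_num)]
        rw [gbz_gt (by push_cast; omega : ((2*N:ℕ):ℤ) < (N:ℤ)+j)]
        rw [gbz_gt (by push_cast; omega : ((2*N:ℕ):ℤ) < ((2*N+2:ℕ):ℤ))]
        rw [show 5 * (((N:ℤ)+1-j)).toNat = 0 from by omega]
        ring
      · rw [gbz_gt (by push_cast; omega : ((2*N+2:ℕ):ℤ) < (N:ℤ)+j+1),
          gbz_gt (by push_cast; omega : ((2*N:ℕ):ℤ) < (N:ℤ)+j),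
          gbz_gt (by push_cast; omega : ((2*N:ℕ):ℤ) < (N:ℤ)+j-1),
          gbz_gt (by push_cast; omega : ((2*N:ℕ):ℤ) < (N:ℤ)+j+1)]
        ring

lemma A3_eq (N : ℕ) (j : ℤ) : A3 N j = -((X:R)^(5*N+3) * Vt N (j-1)) := by
  unfold A3 Vt
  by_cases hj : j ≤ (N:ℤ)+1
  · have hp := en_pred j
    have hX : (X:R)^(en j) * (X:R)^(5 * ((N:ℤ)+1-j).toNat)
        = (X:R)^(en (j-1)) * (X:R)^(5*N+3) := by
      rw [← pow_add, ← pow_add]; congr 1; omega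
    rw [show (N:ℤ) + (j-1) = (N:ℤ)+j-1 from by ring, sg_pred]
    linear_combination (gbz 5 (2*N) ((N:ℤ)+j-1) * sg j) * hX
  · rw [show (N:ℤ)+j-1 = (N:ℤ)+(j-1) from by ring]
    rw [gbz_gt (by push_cast; omega : ((2*N:ℕ):ℤ) < (N:ℤ)+(j-1))]
    ring

lemma A4_eq (N : ℕ) (j : ℤ) : A4 N j = -((X:R)^(5*N+2) * Vt N (j+1)) := by
  unfold A4 Vt
  by_cases hj : -(N:ℤ)-1 ≤ j
  · have hp := en_succ j
    have hX : (X:R)^(en j) * (X:R)^(5 * ((N:ℤ)+1+j).toNat)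
        = (X:R)^(en (j+1)) * (X:R)^(5*N+2) := by
      rw [← pow_add, ← pow_add]; congr 1; omega
    rw [show (N:ℤ) + (j+1) = (N:ℤ)+j+1 from by ring, sg_succ]
    linear_combination (gbz 5 (2*N) ((N:ℤ)+j+1) * sg j) * hX
  · rw [show (N:ℤ)+j+1 = (N:ℤ)+(j+1) from by ring]
    rw [gbz_neg (by omega : (N:ℤ)+(j+1) < 0)]
    ring

lemma Wp_succ (N : ℕ) :
    Wp (N+1) = (1 - (X:R)^(5*N+2)) * ((1 - (X:R)^(5*N+3)) * Wp N) := by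
  have h1 : Wp (N+1) = ∑ j ∈ Icc (-(N:ℤ)-2) ((N:ℤ)+2), Vt (N+1) j :=
    Wp_ext (by push_cast; omega) (by push_cast; omega)
  have h0 : Wp N = ∑ j ∈ Icc (-(N:ℤ)-2) ((N:ℤ)+2), Vt N j :=
    Wp_ext (by omega) (by omega)
  have hA3 : ∑ j ∈ Icc (-(N:ℤ)-2) ((N:ℤ)+2), A3 N j = -((X:R)^(5*N+3) * Wp N) := by
    rw [Finset.sum_congr rfl (fun j _ => A3_eq N j), Finset.sum_neg_distrib,
      ← Finset.mul_sum]
    have hre : ∑ j ∈ Icc (-(N:ℤ)-2) ((N:ℤ)+2), Vt N (j-1)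
        = ∑ j ∈ Icc (-(N:ℤ)-3) ((N:ℤ)+1), Vt N j := by
      refine Finset.sum_nbij' (fun j => j - 1) (fun j => j + 1) ?_ ?_ ?_ ?_ ?_
      · intro a ha; simp only [Finset.mem_Icc] at ha ⊢; omega
      · intro a ha; simp only [Finset.mem_Icc] at ha ⊢; omega
      · intro a _; ring
      · intro a _; ring
      · intro a _; rfl
    rw [hre, ← Wp_ext (by omega) (by omega)]
  have hA4 : ∑ j ∈ Icc (-(N:ℤ)-2) ((N:ℤ)+2), A4 N j = -((X:R)^(5*N+2) * Wp N) := by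
    rw [Finset.sum_congr rfl (fun j _ => A4_eq N j), Finset.sum_neg_distrib,
      ← Finset.mul_sum]
    have hre : ∑ j ∈ Icc (-(N:ℤ)-2) ((N:ℤ)+2), Vt N (j+1)
        = ∑ j ∈ Icc (-(N:ℤ)-1) ((N:ℤ)+3), Vt N j := by
      refine Finset.sum_nbij' (fun j => j + 1) (fun j => j - 1) ?_ ?_ ?_ ?_ ?_
      · intro a ha; simp only [Finset.mem_Icc] at ha ⊢; omega
      · intro a ha; simp only [Finset.mem_Icc] at ha ⊢; omega
      · intro a _; ring
      · intro a _; ring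
      · intro a _; rfl
    rw [hre, ← Wp_ext (by omega) (by omega)]
  have hdag : ∑ j ∈ Icc (-(N:ℤ)-2) ((N:ℤ)+2), Vt (N+1) j
      = (∑ j ∈ Icc (-(N:ℤ)-2) ((N:ℤ)+2), Vt N j)
        + (X:R)^(5*(2*N+1)) * (∑ j ∈ Icc (-(N:ℤ)-2) ((N:ℤ)+2), Vt N j)
        + (∑ j ∈ Icc (-(N:ℤ)-2) ((N:ℤ)+2), A3 N j)
        + (∑ j ∈ Icc (-(N:ℤ)-2) ((N:ℤ)+2), A4 N j) := by
    rw [Finset.mul_sum, ← Finset.sum_add_distrib, ← Finset.sum_add_distrib,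
      ← Finset.sum_add_distrib]
    apply Finset.sum_congr rfl
    intro j hj
    rw [Finset.mem_Icc] at hj
    exact dagger N j hj.1 hj.2
  have hpow : (X:R)^(5*N+2) * (X:R)^(5*N+3) = (X:R)^(5*(2*N+1)) := by
    rw [← pow_add]; congr 1; omega
  rw [h1, hdag, hA3, hA4, ← h0]
  linear_combination (Wp N) * hpow

lemma Wp_zero : Wp 0 = 1 := by
  unfold Wp
  rw [show (-(0:ℕ):ℤ) = (0:ℤ) from by norm_num, show ((0:ℕ):ℤ) = (0:ℤ) from rfl,
    Finset.Icc_self, Finset.sum_singleton]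
  unfold Vt sg en
  norm_num
  exact gbz_zero _ _ (by norm_num)

lemma Wp_eq (N : ℕ) :
    Wp N = ∏ n ∈ range N, ((1 - (X:R)^(5*n+2)) * (1 - (X:R)^(5*n+3))) := by
  induction N with
  | zero => rw [Wp_zero]; simp
  | succ n ih =>
    rw [Wp_succ, ih, Finset.prod_range_succ]
    ring



/-! ### truncation of the sums -/

lemma gb_trunc2 {s n k : ℕ} (hs : 1 ≤ s) (hkn : k ≤ n) :
    MD (s*((n-k)+1)) (gb s n k) ((E s k)⁻¹) := by
  have hcc : constantCoeff (E s k * E s (n-k)) ≠ 0 := by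
    rw [map_mul, constantCoeff_E _ _ hs, constantCoeff_E _ _ hs]; norm_num
  apply MD_cancel hcc
  have e1 : E s k * E s (n-k) * gb s n k = E s n := by
    have := gb_spec s (n := n) (k := k) hs
    calc E s k * E s (n-k) * gb s n k = gb s n k * (E s k * E s (n-k)) := by ring
      _ = E s n := this
  have e2 : E s k * E s (n-k) * (E s k)⁻¹ = E s (n-k) := by
    calc E s k * E s (n-k) * (E s k)⁻¹ = (E s k * (E s k)⁻¹) * E s (n-k) := by ring
      _ = E s (n-k) := by rw [E_mul_inv _ _ hs, one_mul]
  rw [e1, e2]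
  exact MD_E hs (by omega)

lemma E_one (n : ℕ) : E 1 n = ∏ j ∈ range n, (1 - (X:R)^(j+1)) := by
  unfold E
  exact Finset.prod_congr rfl (fun j _ => by rw [one_mul])

lemma natAbs_le_of_sq_le {j : ℤ} {d : ℕ} (h : j^2 ≤ (d:ℤ)) : j.natAbs ≤ d := by
  have h1 : (j.natAbs : ℤ)^2 ≤ (d:ℤ) := by rw [← Int.natAbs_sq j] at h; exact_mod_cast h
  have h2 : j.natAbs^2 ≤ d := by exact_mod_cast h1
  calc j.natAbs ≤ j.natAbs^2 := Nat.le_self_pow (by norm_num) _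
    _ ≤ d := h2

lemma MD_term_zero {k : ℕ} (c g : R) {e : ℕ} (h : k ≤ e) : MD k (c * (X:R)^e * g) 0 := by
  unfold MD
  rw [sub_zero]
  exact Dvd.dvd.trans (pow_dvd_pow _ h) ⟨c * g, by ring⟩

lemma L1 (d : ℕ) :
    MD (d+1) (∑ n ∈ range (d+1), (X:R)^(n^2) * (E 1 n)⁻¹) (Sp (8*d+8)) := by
  have hsub : range (d+1) ⊆ range (8*d+8+1) := Finset.range_subset_range.mpr (by omega)
  have hsplit : MD (d+1) (Sp (8*d+8)) (∑ k ∈ range (d+1), (X:R)^(k^2) * gbz 1 (8*d+8-k) (k:ℤ)) := by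
    unfold MD Sp
    rw [← Finset.sum_sdiff hsub, add_sub_cancel_right]
    apply Finset.dvd_sum
    intro k hk
    have hk' : d + 1 ≤ k := by
      simp only [Finset.mem_sdiff, Finset.mem_range] at hk
      omega
    have : d + 1 ≤ k^2 := le_trans hk' (Nat.le_self_pow (by norm_num) _)
    exact Dvd.dvd.trans (pow_dvd_pow _ this) ⟨gbz 1 (8*d+8-k) (k:ℤ), rfl⟩
  refine MD.trans ?_ hsplit.symm
  apply MD.sum
  intro k hk
  rw [Finset.mem_range] at hk
  have hkd : k ≤ d := by omega
  have hk2 : (k:ℤ) ≤ ((8*d+8-k : ℕ) : ℤ) := by push_cast; omega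
  rw [gbz_eq_gb (Int.ofNat_nonneg k) hk2, Int.toNat_natCast]
  have htr := gb_trunc2 (s := 1) (n := 8*d+8-k) (k := k) le_rfl (by omega)
  have htr' := htr.weaken (show d+1 ≤ 1*(((8*d+8-k) - k)+1) from by omega)
  have hmul := MD_X_pow_mul (e := k^2) htr'.symm
  -- hmul : MD (k^2+(d+1)) (X^(k^2)*(E 1 k)⁻¹) (X^(k^2)*gb ...)
  exact hmul.weaken (Nat.le_add_left _ _)

lemma L3 (d : ℕ) :
    MD (d+1) (Tp (8*d+8)) ((E 1 (d+1))⁻¹ * Pp (8*d+8)) := by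
  unfold Tp Pp
  rw [Finset.mul_sum]
  apply MD.sum
  intro j hj
  rw [Finset.mem_Icc] at hj
  unfold Tt
  by_cases hen : en j ≤ d
  · have hjd : j.natAbs ≤ d := natAbs_le_of_sq_le (le_trans (sq_le_en j) (by exact_mod_cast hen))
    have hja : -(d:ℤ) ≤ j ∧ j ≤ (d:ℤ) := by omega
    have hb1 : (0:ℤ) ≤ hT (8*d+8) j := by unfold hT; push_cast; omega
    have hb2 : hT (8*d+8) j ≤ ((8*d+8 : ℕ):ℤ) := by unfold hT; push_cast; omega
    rw [gbz_eq_gb hb1 hb2]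
    have h1 : d + 1 ≤ (hT (8*d+8) j).toNat := by unfold hT; push_cast; omega
    have h2 : (hT (8*d+8) j).toNat + (d+1) ≤ 8*d+8 := by unfold hT; push_cast; omega
    have htr := gb_trunc (s := 1) le_rfl h1 h2
    have := MD.mul_left (sg j * (X:R)^(en j)) htr
    rw [show sg j * (X:R)^(en j) * (E 1 (d+1))⁻¹
        = (E 1 (d+1))⁻¹ * (sg j * (X:R)^(en j)) from by ring] at this
    exact this
  · have hz1 : MD (d+1) (sg j * (X:R)^(en j) * gbz 1 (8*d+8) (hT (8*d+8) j)) 0 :=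
      MD_term_zero _ _ (by omega)
    have hz2 : MD (d+1) ((E 1 (d+1))⁻¹ * (sg j * (X:R)^(en j))) 0 := by
      have := MD_term_zero ((E 1 (d+1))⁻¹ * sg j) (1:R) (h := (by omega : d + 1 ≤ en j))
      rw [show (E 1 (d+1))⁻¹ * sg j * (X:R)^(en j) * 1
          = (E 1 (d+1))⁻¹ * (sg j * (X:R)^(en j)) from by ring] at this
      exact this
    exact hz1.trans hz2.symm

lemma L5 (d : ℕ) :
    MD (d+1) (Wp (2*d+2)) ((E 5 (d+1))⁻¹ * Pp (2*d+2)) := by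
  unfold Wp Pp
  rw [Finset.mul_sum]
  apply MD.sum
  intro j hj
  rw [Finset.mem_Icc] at hj
  unfold Vt
  by_cases hen : en j ≤ d
  · have hjd : j.natAbs ≤ d := natAbs_le_of_sq_le (le_trans (sq_le_en j) (by exact_mod_cast hen))
    have hja : -(d:ℤ) ≤ j ∧ j ≤ (d:ℤ) := by omega
    have hb1 : (0:ℤ) ≤ ((2*d+2 : ℕ):ℤ) + j := by push_cast; omega
    have hb2 : ((2*d+2 : ℕ):ℤ) + j ≤ ((2*(2*d+2) : ℕ):ℤ) := by push_cast; omega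
    rw [gbz_eq_gb hb1 hb2]
    have h1 : d + 1 ≤ (((2*d+2 : ℕ):ℤ) + j).toNat := by push_cast; omega
    have h2 : (((2*d+2 : ℕ):ℤ) + j).toNat + (d+1) ≤ 2*(2*d+2) := by push_cast; omega
    have htr := gb_trunc (s := 5) (by norm_num) h1 h2
    have := MD.mul_left (sg j * (X:R)^(en j)) htr
    rw [show sg j * (X:R)^(en j) * (E 5 (d+1))⁻¹
        = (E 5 (d+1))⁻¹ * (sg j * (X:R)^(en j)) from by ring] at this
    exact this
  · have hz1 : MD (d+1) (sg j * (X:R)^(en j) * gbz 5 (2*(2*d+2)) (((2*d+2 : ℕ):ℤ) + j)) 0 :=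
      MD_term_zero _ _ (by omega)
    have hz2 : MD (d+1) ((E 5 (d+1))⁻¹ * (sg j * (X:R)^(en j))) 0 := by
      have := MD_term_zero ((E 5 (d+1))⁻¹ * sg j) (1:R) (h := (by omega : d + 1 ≤ en j))
      rw [show (E 5 (d+1))⁻¹ * sg j * (X:R)^(en j) * 1
          = (E 5 (d+1))⁻¹ * (sg j * (X:R)^(en j)) from by ring] at this
      exact this
    exact hz1.trans hz2.symm

lemma Pp_ext {d L L' : ℕ} (h1 : d ≤ L) (h2 : L ≤ L') : MD (d+1) (Pp L') (Pp L) := by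
  unfold MD Pp
  have hsub : Icc (-(L:ℤ)) (L:ℤ) ⊆ Icc (-(L':ℤ)) (L':ℤ) := by
    intro x hx
    rw [Finset.mem_Icc] at hx ⊢
    omega
  rw [← Finset.sum_sdiff hsub, add_sub_cancel_right]
  apply Finset.dvd_sum
  intro j hj
  simp only [Finset.mem_sdiff, Finset.mem_Icc] at hj
  have hbig : (L:ℤ) + 1 ≤ j ∨ j ≤ -(L:ℤ) - 1 := by omega
  have hd1 : ((d:ℤ)+1) ≤ en j := by
    have hse := sq_le_en j
    rcases hbig with hb | hb <;> nlinarith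
  have : d + 1 ≤ en j := by exact_mod_cast hd1
  exact Dvd.dvd.trans (pow_dvd_pow _ this) ⟨sg j, by ring⟩

lemma prod_one_sub_filter (D : ℕ) (s : Finset ℕ) :
    MD D (∏ e ∈ s, (1-(X:R)^e)) (∏ e ∈ s.filter (fun e => e < D), (1-(X:R)^e)) := by
  rw [← Finset.prod_filter_mul_prod_filter_not s (fun e => e < D)]
  have h2 : MD D (∏ e ∈ s.filter (fun e => ¬ e < D), (1-(X:R)^e)) 1 :=
    MD.prod_one (fun e he => MD_one_sub (by
      simp only [Finset.mem_filter] at he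
      omega))
  have h3 := (MD.rfl (a := ∏ e ∈ s.filter (fun e => e < D), (1-(X:R)^e))).mul h2
  rw [mul_one] at h3
  exact h3

/-! ### assembling the product side -/

lemma C0 (d : ℕ) :
    (∏ n ∈ range (d+1), ((1 - (X:R)^(5*n+1)) * (1 - (X:R)^(5*n+4))))
    * (∏ n ∈ range (d+1), ((1 - (X:R)^(5*n+1)) * (1 - (X:R)^(5*n+4)))⁻¹) = 1 := by
  rw [← Finset.prod_mul_distrib]
  apply Finset.prod_eq_one
  intro n _
  apply PowerSeries.mul_inv_cancel
  rw [map_mul, constantCoeff_one_sub_X_pow _ (by omega), constantCoeff_one_sub_X_pow _ (by omega)]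
  norm_num

lemma img_prod (c r : ℕ) :
    ∏ e ∈ (range c).image (fun n => 5*n+r), (1 - (X:R)^e)
      = ∏ n ∈ range c, (1 - (X:R)^(5*n+r)) :=
  Finset.prod_image (fun x _ y _ h => by omega)

lemma img_prod1 (c : ℕ) :
    ∏ e ∈ (range c).image (fun n => n+1), (1 - (X:R)^e)
      = ∏ n ∈ range c, (1 - (X:R)^(n+1)) :=
  Finset.prod_image (fun x _ y _ h => by omega)

lemma hsets (d : ℕ) :
    (((((range (d+1)).image (fun n => 5*n+1) ∪ (range (d+1)).image (fun n => 5*n+4))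
      ∪ (range (d+1)).image (fun n => 5*n+5)) ∪ (range (2*d+2)).image (fun n => 5*n+2))
      ∪ (range (2*d+2)).image (fun n => 5*n+3)).filter (fun e => e < d+1)
      = ((range (d+1)).image (fun n => n+1)).filter (fun e => e < d+1) := by
  ext e
  simp only [Finset.mem_filter, Finset.mem_union, Finset.mem_image, Finset.mem_range]
  constructor
  · rintro ⟨h, he⟩
    refine ⟨?_, he⟩
    rcases h with ((((⟨n,hn,rfl⟩|⟨n,hn,rfl⟩)|⟨n,hn,rfl⟩)|⟨n,hn,rfl⟩)|⟨n,hn,rfl⟩)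
    · exact ⟨5*n, by omega, by omega⟩
    · exact ⟨5*n+3, by omega, by omega⟩
    · exact ⟨5*n+4, by omega, by omega⟩
    · exact ⟨5*n+1, by omega, by omega⟩
    · exact ⟨5*n+2, by omega, by omega⟩
  · rintro ⟨⟨j, hj, rfl⟩, hlt⟩
    refine ⟨?_, hlt⟩
    have h5 : (j+1) % 5 = 0 ∨ (j+1) % 5 = 1 ∨ (j+1) % 5 = 2 ∨ (j+1) % 5 = 3 ∨ (j+1) % 5 = 4 := by
      omega
    rcases h5 with h5|h5|h5|h5|h5
    · exact Or.inl (Or.inl (Or.inr ⟨(j+1)/5 - 1, by omega, by omega⟩))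
    · exact Or.inl (Or.inl (Or.inl (Or.inl ⟨(j+1)/5, by omega, by omega⟩)))
    · exact Or.inl (Or.inr ⟨(j+1)/5, by omega, by omega⟩)
    · exact Or.inr ⟨(j+1)/5, by omega, by omega⟩
    · exact Or.inl (Or.inl (Or.inl (Or.inr ⟨(j+1)/5, by omega, by omega⟩)))

lemma disj_img {c1 c2 r1 r2 : ℕ} (h : ∀ n m : ℕ, 5*n+r1 ≠ 5*m+r2) :
    Disjoint ((range c1).image (fun n => 5*n+r1)) ((range c2).image (fun n => 5*n+r2)) := by
  rw [Finset.disjoint_left]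
  intro a ha hb
  simp only [Finset.mem_image, Finset.mem_range] at ha hb
  obtain ⟨n, _, rfl⟩ := ha
  obtain ⟨m, _, hm⟩ := hb
  exact h n m hm.symm

lemma C6 (d : ℕ) :
    MD (d+1) ((∏ n ∈ range (d+1), ((1 - (X:R)^(5*n+1)) * (1 - (X:R)^(5*n+4))))
      * (E 5 (d+1) * ∏ n ∈ range (2*d+2), ((1 - (X:R)^(5*n+2)) * (1 - (X:R)^(5*n+3)))))
      (E 1 (d+1)) := by
  set I1 := (range (d+1)).image (fun n => 5*n+1) with hI1
  set I4 := (range (d+1)).image (fun n => 5*n+4) with hI4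
  set I5 := (range (d+1)).image (fun n => 5*n+5) with hI5
  set I2 := (range (2*d+2)).image (fun n => 5*n+2) with hI2
  set I3 := (range (2*d+2)).image (fun n => 5*n+3) with hI3
  have hE5 : E 5 (d+1) = ∏ e ∈ I5, (1 - (X:R)^e) := by
    rw [hI5, img_prod]
    unfold E
    exact Finset.prod_congr rfl (fun j _ => by rw [show 5*(j+1) = 5*j+5 from by ring])
  have hE1 : E 1 (d+1) = ∏ e ∈ (range (d+1)).image (fun n => n+1), (1 - (X:R)^e) := by
    rw [img_prod1]
    unfold E
    exact Finset.prod_congr rfl (fun j _ => by rw [one_mul])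
  have hG : (∏ n ∈ range (d+1), ((1 - (X:R)^(5*n+1)) * (1 - (X:R)^(5*n+4))))
      = (∏ e ∈ I1, (1 - (X:R)^e)) * (∏ e ∈ I4, (1 - (X:R)^e)) := by
    rw [Finset.prod_mul_distrib, hI1, hI4, img_prod, img_prod]
  have hP : (∏ n ∈ range (2*d+2), ((1 - (X:R)^(5*n+2)) * (1 - (X:R)^(5*n+3))))
      = (∏ e ∈ I2, (1 - (X:R)^e)) * (∏ e ∈ I3, (1 - (X:R)^e)) := by
    rw [Finset.prod_mul_distrib, hI2, hI3, img_prod, img_prod]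
  have d14 : Disjoint I1 I4 := disj_img (by omega)
  have d145 : Disjoint (I1 ∪ I4) I5 :=
    Finset.disjoint_union_left.mpr ⟨disj_img (by omega), disj_img (by omega)⟩
  have d1452 : Disjoint ((I1 ∪ I4) ∪ I5) I2 :=
    Finset.disjoint_union_left.mpr
      ⟨Finset.disjoint_union_left.mpr ⟨disj_img (by omega), disj_img (by omega)⟩,
        disj_img (by omega)⟩
  have d14523 : Disjoint (((I1 ∪ I4) ∪ I5) ∪ I2) I3 :=
    Finset.disjoint_union_left.mpr
      ⟨Finset.disjoint_union_left.mpr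
        ⟨Finset.disjoint_union_left.mpr ⟨disj_img (by omega), disj_img (by omega)⟩,
          disj_img (by omega)⟩,
        disj_img (by omega)⟩
  have hUU : ∏ e ∈ (((I1 ∪ I4) ∪ I5) ∪ I2) ∪ I3, (1 - (X:R)^e)
      = ((((∏ e ∈ I1, (1 - (X:R)^e)) * (∏ e ∈ I4, (1 - (X:R)^e))) * (∏ e ∈ I5, (1 - (X:R)^e)))
          * (∏ e ∈ I2, (1 - (X:R)^e))) * (∏ e ∈ I3, (1 - (X:R)^e)) := by
    rw [Finset.prod_union d14523, Finset.prod_union d1452, Finset.prod_union d145,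
      Finset.prod_union d14]
  have hLHS : (∏ n ∈ range (d+1), ((1 - (X:R)^(5*n+1)) * (1 - (X:R)^(5*n+4))))
      * (E 5 (d+1) * ∏ n ∈ range (2*d+2), ((1 - (X:R)^(5*n+2)) * (1 - (X:R)^(5*n+3))))
      = ∏ e ∈ (((I1 ∪ I4) ∪ I5) ∪ I2) ∪ I3, (1 - (X:R)^e) := by
    rw [hG, hP, hE5, hUU]
    ring
  rw [hLHS, hE1]
  have hf1 := prod_one_sub_filter (d+1) ((((I1 ∪ I4) ∪ I5) ∪ I2) ∪ I3)
  have hf2 := prod_one_sub_filter (d+1) ((range (d+1)).image (fun n => n+1))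
  have hss := hsets d
  rw [hI1, hI4, hI5, hI2, hI3] at hf1
  rw [hss] at hf1
  rw [← hI1, ← hI4, ← hI5, ← hI2, ← hI3] at hf1
  exact hf1.trans hf2.symm

/-! ### the main theorem -/

theorem main_thm (d : ℕ) :
    PowerSeries.coeff d
        (∑ n ∈ Finset.range (d + 1),
          (PowerSeries.X : PowerSeries ℚ) ^ (n ^ 2) *
            (∏ j ∈ Finset.range n, (1 - (PowerSeries.X : PowerSeries ℚ) ^ (j + 1)))⁻¹)
      = PowerSeries.coeff d
        (∏ n ∈ Finset.range (d + 1),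
          ((1 - (PowerSeries.X : PowerSeries ℚ) ^ (5 * n + 1)) *
            (1 - (PowerSeries.X : PowerSeries ℚ) ^ (5 * n + 4)))⁻¹) := by
  apply MD.coeff_eq
  have hstmt : (∑ n ∈ Finset.range (d + 1),
      (PowerSeries.X : PowerSeries ℚ) ^ (n ^ 2) *
        (∏ j ∈ Finset.range n, (1 - (PowerSeries.X : PowerSeries ℚ) ^ (j + 1)))⁻¹)
      = ∑ n ∈ range (d+1), (X:R)^(n^2) * (E 1 n)⁻¹ := by
    apply Finset.sum_congr rfl
    intro n _
    rw [E_one]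
  rw [hstmt]
  -- chain
  have c1 : MD (d+1) (∑ n ∈ range (d+1), (X:R)^(n^2) * (E 1 n)⁻¹) (Tp (8*d+8)) := by
    have := L1 d
    rwa [Sp_eq_Tp] at this
  have c2 := c1.trans (L3 d)
  have c3 : MD (d+1) ((E 1 (d+1))⁻¹ * Pp (8*d+8)) ((E 1 (d+1))⁻¹ * Pp (2*d+2)) :=
    MD.mul_left _ (Pp_ext (by omega) (by omega))
  have c4 := c2.trans c3
  -- Pp (2d+2) ≡ E 5 (d+1) * Prod23
  have h5' : MD (d+1) ((E 5 (d+1))⁻¹ * Pp (2*d+2))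
      (∏ n ∈ range (2*d+2), ((1 - (X:R)^(5*n+2)) * (1 - (X:R)^(5*n+3)))) := by
    have := (L5 d).symm
    rwa [Wp_eq] at this
  have h5'' : MD (d+1) (Pp (2*d+2))
      (E 5 (d+1) * ∏ n ∈ range (2*d+2), ((1 - (X:R)^(5*n+2)) * (1 - (X:R)^(5*n+3)))) := by
    have h := MD.mul_left (E 5 (d+1)) h5'
    rwa [show E 5 (d+1) * ((E 5 (d+1))⁻¹ * Pp (2*d+2))
        = (E 5 (d+1) * (E 5 (d+1))⁻¹) * Pp (2*d+2) from by ring,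
      E_mul_inv _ _ (by norm_num), one_mul] at h
  have c5 := c4.trans (MD.mul_left ((E 1 (d+1))⁻¹) h5'')
  -- final product manipulation
  have hcc : constantCoeff (E 1 (d+1)
      * ∏ n ∈ range (d+1), ((1 - (X:R)^(5*n+1)) * (1 - (X:R)^(5*n+4)))) ≠ 0 := by
    rw [map_mul, constantCoeff_E _ _ le_rfl, map_prod]
    have : ∀ n ∈ range (d+1),
        constantCoeff ((1 - (X:R)^(5*n+1)) * (1 - (X:R)^(5*n+4))) = 1 := by
      intro n _
      rw [map_mul, constantCoeff_one_sub_X_pow _ (by omega),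
        constantCoeff_one_sub_X_pow _ (by omega)]
      norm_num
    rw [Finset.prod_congr rfl this]
    simp
  have c6 : MD (d+1)
      ((E 1 (d+1))⁻¹ * (E 5 (d+1) * ∏ n ∈ range (2*d+2), ((1 - (X:R)^(5*n+2)) * (1 - (X:R)^(5*n+3)))))
      (∏ n ∈ range (d+1), ((1 - (X:R)^(5*n+1)) * (1 - (X:R)^(5*n+4)))⁻¹) := by
    apply MD_cancel hcc
    have eL : (E 1 (d+1) * ∏ n ∈ range (d+1), ((1 - (X:R)^(5*n+1)) * (1 - (X:R)^(5*n+4))))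
        * ((E 1 (d+1))⁻¹ * (E 5 (d+1) * ∏ n ∈ range (2*d+2), ((1 - (X:R)^(5*n+2)) * (1 - (X:R)^(5*n+3)))))
        = (∏ n ∈ range (d+1), ((1 - (X:R)^(5*n+1)) * (1 - (X:R)^(5*n+4))))
          * (E 5 (d+1) * ∏ n ∈ range (2*d+2), ((1 - (X:R)^(5*n+2)) * (1 - (X:R)^(5*n+3)))) := by
      calc (E 1 (d+1) * ∏ n ∈ range (d+1), ((1 - (X:R)^(5*n+1)) * (1 - (X:R)^(5*n+4))))
          * ((E 1 (d+1))⁻¹ * (E 5 (d+1) * ∏ n ∈ range (2*d+2), ((1 - (X:R)^(5*n+2)) * (1 - (X:R)^(5*n+3)))))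
          = (E 1 (d+1) * (E 1 (d+1))⁻¹) * ((∏ n ∈ range (d+1), ((1 - (X:R)^(5*n+1)) * (1 - (X:R)^(5*n+4))))
            * (E 5 (d+1) * ∏ n ∈ range (2*d+2), ((1 - (X:R)^(5*n+2)) * (1 - (X:R)^(5*n+3))))) := by ring
        _ = _ := by rw [E_mul_inv _ _ le_rfl, one_mul]
    have eR : (E 1 (d+1) * ∏ n ∈ range (d+1), ((1 - (X:R)^(5*n+1)) * (1 - (X:R)^(5*n+4))))
        * (∏ n ∈ range (d+1), ((1 - (X:R)^(5*n+1)) * (1 - (X:R)^(5*n+4)))⁻¹)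
        = E 1 (d+1) := by
      calc (E 1 (d+1) * ∏ n ∈ range (d+1), ((1 - (X:R)^(5*n+1)) * (1 - (X:R)^(5*n+4))))
          * (∏ n ∈ range (d+1), ((1 - (X:R)^(5*n+1)) * (1 - (X:R)^(5*n+4)))⁻¹)
          = E 1 (d+1) * ((∏ n ∈ range (d+1), ((1 - (X:R)^(5*n+1)) * (1 - (X:R)^(5*n+4))))
            * (∏ n ∈ range (d+1), ((1 - (X:R)^(5*n+1)) * (1 - (X:R)^(5*n+4)))⁻¹)) := by ring
        _ = E 1 (d+1) := by rw [C0, mul_one]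
    rw [eL, eR]
    exact C6 d
  exact c5.trans c6


end

end RRaux

open PowerSeries

/-- The first Rogers–Ramanujan identity, as an identity of formal power series over `ℚ`,
stated coefficientwise: for every degree `d`, the coefficient of `q^d` of
`∑_{n≥0} q^{n²}/((q;q)_n)` equals that of `∏_{n≥0} 1/((1-q^{5n+1})(1-q^{5n+4}))`.
Terms with `n > d` contribute nothing to the coefficient of `q^d` on either side,
so both sides may be truncated at `n ≤ d`. -/
theorem rogers_ramanujan_first (d : ℕ) :
    PowerSeries.coeff d
        (∑ n ∈ Finset.range (d + 1),
          (PowerSeries.X : PowerSeries ℚ) ^ (n ^ 2) *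
            (∏ j ∈ Finset.range n, (1 - (PowerSeries.X : PowerSeries ℚ) ^ (j + 1)))⁻¹)
      = PowerSeries.coeff d
        (∏ n ∈ Finset.range (d + 1),
          ((1 - (PowerSeries.X : PowerSeries ℚ) ^ (5 * n + 1)) *
            (1 - (PowerSeries.X : PowerSeries ℚ) ^ (5 * n + 4)))⁻¹) :=
  RRaux.main_thm d
end

section
/- The Andrews-Gordon identity for i = m+1: for every positive integer m, ∑_{r₁ ≥ r₂ ≥ ··· ≥ r_m ≥ 0} q^{r₁²+···+r_m²} / ((q;q)_{r₁−r₂} ··· (q;q)_{r_{m−1}−r_m} (q;q)_{r_m}) = (q^{2m+3};q^{2m+3})_∞ / (q;q)_∞ · θ(q^{m+1}; q^{2m+3}), as formal power series in q. -/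
open scoped Classical
open PowerSeries

/-- `(q;q)_k` as a power series over `ℚ`. -/
noncomputable def qp (k : ℕ) : PowerSeries ℚ :=
  ∏ j ∈ Finset.range k, (1 - (PowerSeries.X : PowerSeries ℚ) ^ (j + 1))

namespace AG

abbrev R : Type := PowerSeries ℚ

/-- triangular-ish exponent `j(j-1)/2` defined by recursion -/
def e2 : ℕ → ℕ
  | 0 => 0
  | j+1 => e2 j + j

lemma e2_cast (j : ℕ) : 2 * (e2 j : ℤ) = (j:ℤ)^2 - j := by
  induction j with
  | zero => simp [e2]
  | succ k ih => show 2 * ((e2 k + k : ℕ) : ℤ) = _; push_cast; push_cast at ih; ring_nf; ring_nf at ih; omega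

noncomputable def qpow (q : R) (k : ℕ) : R := ∏ j ∈ Finset.range k, (1 - q ^ (j + 1))

lemma qp_eq (k : ℕ) : qp k = qpow PowerSeries.X k := rfl

lemma qpow_zero (q : R) : qpow q 0 = 1 := by simp [qpow]

lemma qpow_succ (q : R) (k : ℕ) : qpow q (k+1) = qpow q k * (1 - q ^ (k+1)) := by
  simp [qpow, Finset.prod_range_succ]

lemma qpow_add (q : R) (a b : ℕ) :
    qpow q (a + b) = qpow q a * ∏ j ∈ Finset.range b, (1 - q ^ (a + 1 + j)) := by
  simp only [qpow, Finset.prod_range_add]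
  congr 1
  refine Finset.prod_congr rfl fun j _ => ?_
  ring_nf

variable {q : R}

lemma cc_qpow (hq : constantCoeff (R := ℚ) q = 0) (k : ℕ) : constantCoeff (R := ℚ) (qpow q k) = 1 := by
  rw [qpow, map_prod]
  refine Finset.prod_eq_one fun j _ => ?_
  simp [hq]

lemma qpow_ne_zero (hq : constantCoeff (R := ℚ) q = 0) (k : ℕ) : qpow q k ≠ 0 := by
  intro h
  have := cc_qpow hq k
  rw [h] at this
  simp at this

lemma qpow_mul_inv (hq : constantCoeff (R := ℚ) q = 0) (k : ℕ) : qpow q k * (qpow q k)⁻¹ = 1 :=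
  PowerSeries.mul_inv_cancel _ (by rw [cc_qpow hq]; exact one_ne_zero)

lemma qpow_inv_mul (hq : constantCoeff (R := ℚ) q = 0) (k : ℕ) : (qpow q k)⁻¹ * qpow q k = 1 :=
  PowerSeries.inv_mul_cancel _ (by rw [cc_qpow hq]; exact one_ne_zero)

/-- Gaussian binomial coefficient in base `q`, via the Pascal recursion. -/
noncomputable def Gr (q : R) : ℕ → ℕ → R
  | 0, 0 => 1
  | 0, _+1 => 0
  | _+1, 0 => 1
  | M+1, t+1 => Gr q M (t+1) + q ^ (M - t) * Gr q M t

lemma Gr_zero_right (M : ℕ) : Gr q M 0 = 1 := by cases M <;> rfl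

lemma Gr_succ_succ (M t : ℕ) :
    Gr q (M+1) (t+1) = Gr q M (t+1) + q ^ (M - t) * Gr q M t := rfl

lemma Gr_eq_zero : ∀ M t : ℕ, M < t → Gr q M t = 0 := by
  intro M
  induction M with
  | zero => intro t ht; match t, ht with | t+1, _ => rfl
  | succ k ih =>
    intro t ht
    match t, ht with
    | t+1, ht =>
      rw [Gr_succ_succ, ih (t+1) (by omega), ih t (by omega), mul_zero, add_zero]

lemma Gr_diag : ∀ M : ℕ, Gr q M M = 1 := by
  intro M
  induction M with
  | zero => rfl
  | succ k ih =>
    rw [Gr_succ_succ, Gr_eq_zero k (k+1) (by omega), ih, Nat.sub_self, pow_zero, one_mul,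
      zero_add]

/-- multiplicative formula for the Gaussian binomial -/
lemma Gr_formula : ∀ M t : ℕ, t ≤ M → Gr q M t * (qpow q t * qpow q (M - t)) = qpow q M := by
  intro M
  induction M with
  | zero =>
    intro t ht; interval_cases t
    rw [Gr_zero_right, qpow_zero]; simp
  | succ k ih =>
    intro t ht
    match t with
    | 0 => rw [Gr_zero_right, qpow_zero, one_mul, one_mul, Nat.sub_zero]
    | t+1 =>
      rcases Nat.lt_or_ge k (t+1) with h | h
      · have hteq : t = k := by omega
        subst hteq
        rw [Gr_diag, Nat.sub_self, qpow_zero, one_mul, mul_one]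
      · rw [Gr_succ_succ]
        have ih1 := ih (t+1) h
        have ih2 := ih t (by omega)
        have he : k - (t+1) + 1 = k - t := by omega
        have h2 : qpow q (k + 1 - (t+1)) = qpow q (k - (t+1)) * (1 - q ^ (k-t)) := by
          have h1 : k + 1 - (t+1) = (k - (t+1)) + 1 := by omega
          rw [h1, qpow_succ, he]
        have h2' : qpow q (k - t) = qpow q (k - (t+1)) * (1 - q ^ (k-t)) := by
          conv_lhs => rw [← he]
          rw [qpow_succ, he]
        have h3 : qpow q (t+1) = qpow q t * (1 - q ^ (t+1)) := qpow_succ q t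
        have h5 : q ^ (k-t) * q ^ (t+1) = q ^ (k+1) := by
          rw [← pow_add]; congr 1; omega
        have hk1 : qpow q (k+1) = qpow q k * (1 - q ^ (k+1)) := qpow_succ q k
        rw [h2'] at ih2
        rw [h2, hk1]
        linear_combination (1 - q^(k-t)) * ih1 + (q^(k-t)) * (1 - q^(t+1)) * ih2
          + (q^(k-t)) * (1 - q^(k-t)) * (Gr q k t) * (qpow q (k-(t+1))) * h3
          - qpow q k * h5

/-- symmetry of the Gaussian binomial -/
lemma Gr_symm (hq : constantCoeff (R := ℚ) q = 0) (M t : ℕ) (ht : t ≤ M) :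
    Gr q M t = Gr q M (M - t) := by
  have h1 := Gr_formula (q := q) M t ht
  have h2 := Gr_formula (q := q) M (M - t) (by omega)
  have h3 : M - (M - t) = t := by omega
  rw [h3] at h2
  have h4 : qpow q t * qpow q (M - t) ≠ 0 :=
    mul_ne_zero (qpow_ne_zero hq t) (qpow_ne_zero hq (M - t))
  apply mul_right_cancel₀ h4
  rw [h1, ← h2]
  ring

/-- the homogeneous finite q-binomial theorem -/
lemma hqbin (x y : R) : ∀ M : ℕ,
    ∏ t ∈ Finset.range M, (y - x * q ^ t)
      = ∑ j ∈ Finset.range (M+1), (-1)^j * Gr q M j * q ^ (e2 j) * x ^ j * y ^ (M - j) := by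
  intro M
  induction M with
  | zero => simp [Gr, e2]
  | succ M ih =>
    rw [Finset.prod_range_succ, ih]
    rw [Finset.sum_range_succ' _ (M+1)]
    have hf0 : (-1:R)^0 * Gr q (M+1) 0 * q ^ (e2 0) * x ^ 0 * y ^ (M + 1 - 0) = y^(M+1) := by
      simp [Gr_zero_right, e2]
    rw [hf0]
    have hsplit : ∀ i ∈ Finset.range (M+1),
        (-1:R)^(i+1) * Gr q (M+1) (i+1) * q ^ (e2 (i+1)) * x ^ (i+1) * y ^ (M + 1 - (i+1))
          = (-1:R)^(i+1) * Gr q M (i+1) * q ^ (e2 (i+1)) * x ^ (i+1) * y ^ (M - i)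
            + (-1:R)^(i+1) * (q^(M-i) * Gr q M i) * q ^ (e2 (i+1)) * x ^ (i+1) * y ^ (M - i) := by
      intro i hi
      rw [Gr_succ_succ]
      have : M + 1 - (i + 1) = M - i := by omega
      rw [this]
      ring
    rw [Finset.sum_congr rfl hsplit, Finset.sum_add_distrib]
    have hS1 : ∑ i ∈ Finset.range (M+1),
        (-1:R)^(i+1) * Gr q M (i+1) * q ^ (e2 (i+1)) * x ^ (i+1) * y ^ (M - i)
          = (∑ j ∈ Finset.range (M+1), (-1:R)^j * Gr q M j * q ^ (e2 j) * x ^ j * y ^ (M - j)) * y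
            - y^(M+1) := by
      rw [Finset.sum_range_succ, Gr_eq_zero M (M+1) (by omega)]
      rw [Finset.sum_mul, Finset.sum_range_succ' _ M]
      have h0 : ((-1:R)^0 * Gr q M 0 * q ^ (e2 0) * x ^ 0 * y ^ (M - 0)) * y = y^(M+1) := by
        simp [Gr_zero_right, e2, ← pow_succ]
      rw [h0]
      have hterm : ∀ i ∈ Finset.range M,
          ((-1:R)^(i+1) * Gr q M (i+1) * q ^ (e2 (i+1)) * x ^ (i+1) * y ^ (M - (i+1))) * y
            = (-1:R)^(i+1) * Gr q M (i+1) * q ^ (e2 (i+1)) * x ^ (i+1) * y ^ (M - i) := by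
        intro i hi
        simp only [Finset.mem_range] at hi
        have : y ^ (M - (i+1)) * y = y ^ (M - i) := by
          rw [← pow_succ]
          congr 1
          omega
        calc ((-1:R)^(i+1) * Gr q M (i+1) * q ^ (e2 (i+1)) * x ^ (i+1) * y ^ (M - (i+1))) * y
            = (-1:R)^(i+1) * Gr q M (i+1) * q ^ (e2 (i+1)) * x ^ (i+1) * (y ^ (M - (i+1)) * y) := by
              ring
          _ = _ := by rw [this]
      rw [Finset.sum_congr rfl hterm]
      ring
    have hS2 : ∑ i ∈ Finset.range (M+1),
        (-1:R)^(i+1) * (q^(M-i) * Gr q M i) * q ^ (e2 (i+1)) * x ^ (i+1) * y ^ (M - i)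
          = -(x * q^M) *
            (∑ j ∈ Finset.range (M+1), (-1:R)^j * Gr q M j * q ^ (e2 j) * x ^ j * y ^ (M - j)) := by
      rw [Finset.mul_sum]
      refine Finset.sum_congr rfl fun i hi => ?_
      simp only [Finset.mem_range] at hi
      have hpow : q^(M-i) * q^(e2 (i+1)) = q^M * q^(e2 i) := by
        simp only [e2]
        rw [← pow_add, ← pow_add]
        congr 1
        omega
      calc (-1:R)^(i+1) * (q^(M-i) * Gr q M i) * q ^ (e2 (i+1)) * x ^ (i+1) * y ^ (M - i)
          = (q^(M-i) * q^(e2 (i+1))) * ((-1:R)^(i+1) * Gr q M i * x ^ (i+1) * y ^ (M - i)) := by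
            ring
        _ = (q^M * q^(e2 i)) * ((-1:R)^(i+1) * Gr q M i * x ^ (i+1) * y ^ (M - i)) := by
            rw [hpow]
        _ = -(x * q^M) * ((-1:R)^i * Gr q M i * q ^ (e2 i) * x ^ i * y ^ (M - i)) := by
            ring
    rw [hS1, hS2]
    ring

/-- Gauss-type vanishing specialization -/
lemma gauss_zero (n : ℕ) (hn : 1 ≤ n) :
    ∑ j ∈ Finset.range (2*n+1), (-1:R)^j * Gr q (2*n) j * q ^ (e2 j + n*(2*n - j)) = 0 := by
  have h := hqbin (q := q) 1 (q^n) (2*n)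
  have hz : ∏ t ∈ Finset.range (2*n), (q^n - 1 * q ^ t) = 0 := by
    apply Finset.prod_eq_zero (i := n)
    · simp only [Finset.mem_range]; omega
    · simp
  rw [hz] at h
  refine Eq.trans (Finset.sum_congr rfl fun j hj => ?_) h.symm
  ring

/-! ### congruence mod `X^(d+1)` -/

def Cg (d : ℕ) (f g : R) : Prop := (PowerSeries.X : R)^(d+1) ∣ (f - g)

lemma Cg.rfl {d : ℕ} {f : R} : Cg d f f := by simp [Cg]

lemma Cg.of_eq {d : ℕ} {f g : R} (h : f = g) : Cg d f g := by simp [Cg, h]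

lemma Cg.symm {d : ℕ} {f g : R} (h : Cg d f g) : Cg d g f := by
  rw [Cg, ← neg_sub f g]
  exact dvd_neg.mpr h

lemma Cg.trans {d : ℕ} {f g h : R} (h1 : Cg d f g) (h2 : Cg d g h) : Cg d f h := by
  have := dvd_add h1 h2
  simpa [Cg, sub_add_sub_cancel] using this

lemma Cg.add {d : ℕ} {f₁ g₁ f₂ g₂ : R} (h1 : Cg d f₁ g₁) (h2 : Cg d f₂ g₂) :
    Cg d (f₁ + f₂) (g₁ + g₂) := by
  have := dvd_add h1 h2
  simpa [Cg, add_sub_add_comm] using this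

lemma Cg.mul {d : ℕ} {f₁ g₁ f₂ g₂ : R} (h1 : Cg d f₁ g₁) (h2 : Cg d f₂ g₂) :
    Cg d (f₁ * f₂) (g₁ * g₂) := by
  have key : f₁ * f₂ - g₁ * g₂ = f₁ * (f₂ - g₂) + (f₁ - g₁) * g₂ := by ring
  rw [Cg, key]
  exact dvd_add (Dvd.dvd.mul_left h2 f₁) (Dvd.dvd.mul_right h1 g₂)

lemma Cg.sum {d : ℕ} {ι : Type*} {s : Finset ι} {f g : ι → R}
    (h : ∀ i ∈ s, Cg d (f i) (g i)) : Cg d (∑ i ∈ s, f i) (∑ i ∈ s, g i) := by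
  rw [Cg, ← Finset.sum_sub_distrib]
  exact Finset.dvd_sum h

lemma Cg.prod {d : ℕ} {ι : Type*} {s : Finset ι} {f g : ι → R}
    (h : ∀ i ∈ s, Cg d (f i) (g i)) : Cg d (∏ i ∈ s, f i) (∏ i ∈ s, g i) := by
  classical
  induction s using Finset.cons_induction with
  | empty => simpa using Cg.rfl
  | cons a s ha ih =>
    rw [Finset.prod_cons, Finset.prod_cons]
    exact (h a (Finset.mem_cons_self a s)).mul (ih fun i hi => h i (Finset.mem_cons_of_mem hi))

lemma Cg.xpow {d e : ℕ} (h : d < e) : Cg d ((PowerSeries.X : R)^e) 0 := by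
  rw [Cg, sub_zero]
  exact pow_dvd_pow _ (by omega)

lemma Cg.coeff_eq {d : ℕ} {f g : R} (h : Cg d f g) :
    PowerSeries.coeff (R := ℚ) d f = PowerSeries.coeff (R := ℚ) d g := by
  have h0 : PowerSeries.coeff (R := ℚ) d (f - g) = 0 := by
    rw [Cg, PowerSeries.X_pow_dvd_iff] at h
    exact h d (by omega)
  rw [map_sub, sub_eq_zero] at h0
  exact h0

lemma Cg.inv {d : ℕ} {f g : R} (h : Cg d f g) (hf : constantCoeff (R := ℚ) f ≠ 0)
    (hg : constantCoeff (R := ℚ) g ≠ 0) : Cg d f⁻¹ g⁻¹ := by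
  have key : f⁻¹ - g⁻¹ = f⁻¹ * (g - f) * g⁻¹ := by
    rw [mul_sub, sub_mul, mul_assoc, PowerSeries.mul_inv_cancel g hg, mul_one,
      PowerSeries.inv_mul_cancel f hf, one_mul]
  rw [Cg, key]
  exact ((h.symm : (PowerSeries.X : R)^(d+1) ∣ (g - f)).mul_left _).mul_right _

lemma constantCoeff_X_pow_eq_zero {c : ℕ} (hc : 1 ≤ c) :
    constantCoeff (R := ℚ) ((PowerSeries.X : R)^c) = 0 := by
  rw [map_pow, PowerSeries.constantCoeff_X]
  exact zero_pow (by omega)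

lemma cg_one_sub_xpow {d e : ℕ} (h : d < e) : Cg d (1 - (PowerSeries.X : R)^e) 1 := by
  rw [Cg]
  have heq : (1 - (PowerSeries.X : R)^e) - 1 = -((PowerSeries.X : R)^e) := by ring
  rw [heq, dvd_neg]
  exact pow_dvd_pow _ (by omega)

lemma cg_qpow_le {c : ℕ} (hc : 1 ≤ c) {d a b : ℕ} (ha : d ≤ a) (hab : a ≤ b) :
    Cg d (qpow ((PowerSeries.X : R)^c) b) (qpow ((PowerSeries.X : R)^c) a) := by
  have hb : b = a + (b - a) := by omega
  rw [hb, qpow_add]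
  have hprod : Cg d (∏ j ∈ Finset.range (b - a), (1 - ((PowerSeries.X : R)^c) ^ (a + 1 + j))) 1 := by
    have := Cg.prod (d := d) (s := Finset.range (b-a))
      (f := fun j => (1 - ((PowerSeries.X : R)^c) ^ (a + 1 + j))) (g := fun _ => 1)
      (fun j hj => by
        show Cg d (1 - ((PowerSeries.X : R)^c) ^ (a + 1 + j)) 1
        rw [← pow_mul]
        have h1 : a + 1 + j ≤ c * (a + 1 + j) := Nat.le_mul_of_pos_left _ (by omega)
        exact cg_one_sub_xpow (by omega))
    simpa using this
  have := (Cg.rfl (d := d) (f := qpow ((PowerSeries.X : R)^c) a)).mul hprod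
  simpa using this

lemma cg_qpow {c : ℕ} (hc : 1 ≤ c) {d a b : ℕ} (ha : d ≤ a) (hb : d ≤ b) :
    Cg d (qpow ((PowerSeries.X : R)^c) a) (qpow ((PowerSeries.X : R)^c) b) := by
  rcases Nat.le_total a b with h | h
  · exact (cg_qpow_le hc ha h).symm
  · exact cg_qpow_le hc hb h

lemma cg_qpow_inv {c : ℕ} (hc : 1 ≤ c) {d a b : ℕ} (ha : d ≤ a) (hb : d ≤ b) :
    Cg d (qpow ((PowerSeries.X : R)^c) a)⁻¹ (qpow ((PowerSeries.X : R)^c) b)⁻¹ := by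
  refine (cg_qpow hc ha hb).inv ?_ ?_ <;>
    { rw [cc_qpow (constantCoeff_X_pow_eq_zero hc)]; exact one_ne_zero }

/-! ### Bailey machinery at `q = X` -/

local notation "XX" => (PowerSeries.X : R)

noncomputable def ip (k : ℕ) : R := (qpow XX k)⁻¹

lemma ccX : constantCoeff (R := ℚ) XX = 0 := PowerSeries.constantCoeff_X

lemma qpow_mul_ip (k : ℕ) : qpow XX k * ip k = 1 := qpow_mul_inv ccX k

lemma ip_mul_qpow (k : ℕ) : ip k * qpow XX k = 1 := qpow_inv_mul ccX k

lemma ip_zero : ip 0 = 1 := by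
  have h := qpow_mul_ip 0
  rwa [qpow_zero, one_mul] at h

/-- The key polynomial identity behind Bailey's lemma. -/
lemma keyK : ∀ M A : ℕ,
    ∑ t ∈ Finset.range (M+1),
      XX ^ (t*(t+A)) * Gr XX M t * ∏ j ∈ Finset.range (M-t), (1 - XX ^ ((A+t) + 1 + j)) = 1 := by
  intro M
  induction M with
  | zero => intro A; simp [Gr, e2]
  | succ M ih =>
    intro A
    rw [Finset.sum_range_succ' _ (M+1)]
    -- t = 0 term
    have hf0 : XX ^ (0*(0+A)) * Gr XX (M+1) 0 * ∏ j ∈ Finset.range (M+1-0), (1 - XX ^ ((A+0) + 1 + j))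
        = XX ^ (0*(0+A)) * Gr XX M 0 * ∏ j ∈ Finset.range (M+1-0), (1 - XX ^ ((A+0) + 1 + j)) := by
      rw [Gr_zero_right, Gr_zero_right]
    rw [hf0]
    have hsplit : ∀ u ∈ Finset.range (M+1),
        XX ^ ((u+1)*((u+1)+A)) * Gr XX (M+1) (u+1) * ∏ j ∈ Finset.range (M+1-(u+1)), (1 - XX ^ ((A+(u+1)) + 1 + j))
          = XX ^ ((u+1)*((u+1)+A)) * Gr XX M (u+1) * ∏ j ∈ Finset.range (M-u), (1 - XX ^ ((A+(u+1)) + 1 + j))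
            + XX ^ ((A+M+1)) * (XX ^ (u*(u+(A+1))) * Gr XX M u * ∏ j ∈ Finset.range (M-u), (1 - XX ^ (((A+1)+u) + 1 + j))) := by
      intro u hu
      simp only [Finset.mem_range] at hu
      rw [Gr_succ_succ]
      have h1 : M + 1 - (u+1) = M - u := by omega
      rw [h1]
      have h2 : ∀ j, (A+(u+1)) + 1 + j = ((A+1)+u) + 1 + j := by intro j; omega
      have h3 : (∏ j ∈ Finset.range (M-u), (1 - XX ^ ((A+(u+1)) + 1 + j)))
          = ∏ j ∈ Finset.range (M-u), (1 - XX ^ (((A+1)+u) + 1 + j)) := by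
        refine Finset.prod_congr rfl fun j _ => by rw [h2]
      have h4 : XX ^ ((u+1)*((u+1)+A)) * XX ^ (M - u) = XX ^ ((A+M+1)) * XX ^ (u*(u+(A+1))) := by
        rw [← pow_add, ← pow_add]
        congr 1
        have h5 : (u+1)*((u+1)+A) + (M-u) = (A+M+1) + u*(u+(A+1)) := by
          obtain ⟨v, hv⟩ : ∃ v, M = u + v := ⟨M - u, by omega⟩
          subst hv
          have : u + v - u = v := by omega
          rw [this]
          ring
        exact h5
      calc XX ^ ((u+1)*((u+1)+A)) * (Gr XX M (u+1) + XX ^ (M-u) * Gr XX M u)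
            * ∏ j ∈ Finset.range (M-u), (1 - XX ^ ((A+(u+1)) + 1 + j))
          = XX ^ ((u+1)*((u+1)+A)) * Gr XX M (u+1) * ∏ j ∈ Finset.range (M-u), (1 - XX ^ ((A+(u+1)) + 1 + j))
            + (XX ^ ((u+1)*((u+1)+A)) * XX ^ (M-u)) * Gr XX M u
              * ∏ j ∈ Finset.range (M-u), (1 - XX ^ ((A+(u+1)) + 1 + j)) := by ring
        _ = _ := by rw [h4, h3]; ring
    rw [Finset.sum_congr rfl hsplit, Finset.sum_add_distrib]
    -- second piece gives X^(A+M+1) * keyK M (A+1)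
    rw [← Finset.mul_sum, ih (A+1)]
    -- first piece: recombine with the t = 0 term to get (1 - X^(A+M+1)) * keyK M A
    have hA : (∑ u ∈ Finset.range (M+1),
          XX ^ ((u+1)*((u+1)+A)) * Gr XX M (u+1) * ∏ j ∈ Finset.range (M-u), (1 - XX ^ ((A+(u+1)) + 1 + j)))
          + XX ^ (0*(0+A)) * Gr XX M 0 * ∏ j ∈ Finset.range (M+1-0), (1 - XX ^ ((A+0) + 1 + j))
        = ∑ t ∈ Finset.range (M+2),
            XX ^ (t*(t+A)) * Gr XX M t * ∏ j ∈ Finset.range (M+1-t), (1 - XX ^ ((A+t) + 1 + j)) := by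
      rw [Finset.sum_range_succ' _ (M+1)]
      congr 1
      refine Finset.sum_congr rfl fun u hu => ?_
      have h1 : M + 1 - (u+1) = M - u := by omega
      rw [h1]
    rw [add_right_comm, hA]
    have hlast : ∑ t ∈ Finset.range (M+2),
          XX ^ (t*(t+A)) * Gr XX M t * ∏ j ∈ Finset.range (M+1-t), (1 - XX ^ ((A+t) + 1 + j))
        = ∑ t ∈ Finset.range (M+1),
            XX ^ (t*(t+A)) * Gr XX M t * ∏ j ∈ Finset.range (M+1-t), (1 - XX ^ ((A+t) + 1 + j)) := by
      rw [Finset.sum_range_succ, Gr_eq_zero M (M+1) (by omega)]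
      ring
    rw [hlast]
    have hfac : ∀ t ∈ Finset.range (M+1),
        XX ^ (t*(t+A)) * Gr XX M t * ∏ j ∈ Finset.range (M+1-t), (1 - XX ^ ((A+t) + 1 + j))
          = (XX ^ (t*(t+A)) * Gr XX M t * ∏ j ∈ Finset.range (M-t), (1 - XX ^ ((A+t) + 1 + j)))
            * (1 - XX ^ (A+M+1)) := by
      intro t ht
      simp only [Finset.mem_range] at ht
      have h1 : M + 1 - t = (M - t) + 1 := by omega
      rw [h1, Finset.prod_range_succ]
      have h2 : (A+t) + 1 + (M - t) = A+M+1 := by omega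
      rw [h2]
      ring
    rw [Finset.sum_congr rfl hfac, ← Finset.sum_mul, ih A, one_mul]
    ring

lemma Gr_eq_ip (M t : ℕ) (h : t ≤ M) : Gr XX M t = qpow XX M * ip t * ip (M - t) := by
  have h1 := Gr_formula (q := XX) M t h
  have : Gr XX M t = Gr XX M t * (qpow XX t * ip t) * (qpow XX (M-t) * ip (M-t)) := by
    rw [qpow_mul_ip, qpow_mul_ip]; ring
  rw [this]
  calc Gr XX M t * (qpow XX t * ip t) * (qpow XX (M-t) * ip (M-t))
      = (Gr XX M t * (qpow XX t * qpow XX (M-t))) * ip t * ip (M-t) := by ring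
    _ = qpow XX M * ip t * ip (M - t) := by rw [h1]

/-- Bailey's lemma step identity -/
lemma bailey_step (s n : ℕ) (hsn : s ≤ n) :
    ∑ r ∈ Finset.Icc s n, XX ^ (r*r) * ip (n-r) * ip (r-s) * ip (r+s)
      = XX ^ (s*s) * ip (n-s) * ip (n+s) := by
  rw [← Finset.Ico_add_one_right_eq_Icc, Finset.sum_Ico_eq_sum_range]
  have hrange : n + 1 - s = (n - s) + 1 := by omega
  rw [hrange]
  have hterm : ∀ t ∈ Finset.range ((n-s)+1),
      XX ^ ((s+t)*(s+t)) * ip (n-(s+t)) * ip ((s+t)-s) * ip ((s+t)+s)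
        = (XX ^ (s*s) * ip (n-s) * ip (n+s))
          * (XX ^ (t*(t+2*s)) * Gr XX (n-s) t * ∏ j ∈ Finset.range ((n-s)-t), (1 - XX ^ ((2*s+t) + 1 + j))) := by
    intro t ht
    simp only [Finset.mem_range] at ht
    have htle : t ≤ n - s := by omega
    have e1 : (s+t) - s = t := by omega
    have e2' : n - (s+t) = n - s - t := by omega
    have e3 : (s+t) + s = 2*s + t := by omega
    rw [e1, e2', e3]
    have hGr : Gr XX (n-s) t = qpow XX (n-s) * ip t * ip (n-s-t) := Gr_eq_ip _ _ htle
    have hS : (∏ j ∈ Finset.range ((n-s)-t), (1 - XX ^ ((2*s+t) + 1 + j)))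
        = ip (2*s+t) * qpow XX (n+s) := by
      have hadd := qpow_add XX (2*s+t) ((n-s)-t)
      have he : 2*s + t + ((n-s) - t) = n + s := by omega
      rw [he] at hadd
      rw [hadd, ← mul_assoc, ip_mul_qpow, one_mul]
    rw [hGr, hS]
    have hxp : XX ^ ((s+t)*(s+t)) = XX ^ (s*s) * XX ^ (t*(t+2*s)) := by
      rw [← pow_add]; congr 1; ring
    rw [hxp]
    have h1 := ip_mul_qpow (n-s)
    have h2 := ip_mul_qpow (n+s)
    linear_combination (-(XX ^ (s*s) * XX ^ (t*(t+2*s)) * ip t * ip (n-s-t) * ip (2*s+t))) * h1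
      + (-(XX ^ (s*s) * XX ^ (t*(t+2*s)) * ip t * ip (n-s-t) * ip (2*s+t)
          * (ip (n-s) * qpow XX (n-s)))) * h2
  rw [Finset.sum_congr rfl hterm, ← Finset.mul_sum]
  have hK := keyK (n - s) (2*s)
  rw [hK, mul_one]

/-! ### the unit Bailey pair -/

noncomputable def al : ℕ → R := fun s =>
  if s = 0 then 1 else (-1)^s * (XX ^ (e2 s) + XX ^ (e2 s + s))

lemma fold_sum (n : ℕ) (f : ℕ → R) :
    ∑ j ∈ Finset.range (2*n+1), f j
      = f n + ∑ j ∈ Finset.range n, (f (n+1+j) + f (n-1-j)) := by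
  have h : 2*n+1 = (n+1) + n := by omega
  rw [h, Finset.sum_range_add, Finset.sum_range_succ,
    ← Finset.sum_range_reflect (fun j => f j) n, Finset.sum_add_distrib]
  ring

lemma e2_plus (n s : ℕ) (h : s ≤ n) :
    e2 (n+s) + n*(2*n-(n+s)) = (e2 n + n*n) + e2 s := by
  have hz : ((e2 (n+s) + n*(2*n-(n+s)) : ℕ) : ℤ) = (((e2 n + n*n) + e2 s : ℕ) : ℤ) := by
    push_cast [Nat.cast_sub (by omega : n + s ≤ 2*n)]
    have h1 := e2_cast (n+s)
    have h2 := e2_cast n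
    have h3 := e2_cast s
    push_cast at h1
    nlinarith [h1, h2, h3]
  exact_mod_cast hz

lemma e2_minus (n s : ℕ) (h : s ≤ n) :
    e2 (n-s) + n*(2*n-(n-s)) = (e2 n + n*n) + (e2 s + s) := by
  have hz : ((e2 (n-s) + n*(2*n-(n-s)) : ℕ) : ℤ) = (((e2 n + n*n) + (e2 s + s) : ℕ) : ℤ) := by
    push_cast [Nat.cast_sub (by omega : n - s ≤ 2*n)]
    have h1 := e2_cast (n-s)
    have h2 := e2_cast n
    have h3 := e2_cast s
    rw [Nat.cast_sub (by omega : s ≤ n)] at h1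
    rw [Nat.cast_sub (by omega : s ≤ n)]
    nlinarith [h1, h2, h3]
  exact_mod_cast hz

lemma neg_one_pow_sub (n s : ℕ) (h : s ≤ n) : (-1:R)^(n-s) = (-1)^(n+s) := by
  have h2 : (-1:R)^(n+s) = (-1)^(n-s) * (-1)^(2*s) := by
    rw [← pow_add]
    congr 1
    omega
  rw [h2, pow_mul]
  norm_num

lemma al_zero : al 0 = 1 := by simp [al]

lemma al_succ (s : ℕ) (h : s ≠ 0) : al s = (-1)^s * (XX ^ (e2 s) + XX ^ (e2 s + s)) := by
  rw [al, if_neg h]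

/-- the unit Bailey pair relation -/
lemma unit_pair (n : ℕ) :
    ∑ s ∈ Finset.range (n+1), al s * ip (n-s) * ip (n+s)
      = if n = 0 then 1 else 0 := by
  rcases Nat.eq_zero_or_pos n with hn | hn
  · subst hn
    simp [al, ip_zero]
  · rw [if_neg (by omega)]
    have hW : ∑ s ∈ Finset.range (n+1), al s * Gr XX (2*n) (n+s) = 0 := by
      have hGZ := gauss_zero (q := XX) n hn
      rw [fold_sum n (fun j => (-1:R)^j * Gr XX (2*n) j * XX ^ (e2 j + n*(2*n - j)))] at hGZ
      have hmid : (-1:R)^n * Gr XX (2*n) n * XX ^ (e2 n + n*(2*n - n))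
          = ((-1)^n * XX ^ (e2 n + n*n)) * (al 0 * Gr XX (2*n) (n+0)) := by
        rw [show 2*n - n = n by omega, al_zero, Nat.add_zero]
        ring
      have hpair : ∀ j ∈ Finset.range n,
          ((-1:R)^(n+1+j) * Gr XX (2*n) (n+1+j) * XX ^ (e2 (n+1+j) + n*(2*n - (n+1+j)))
            + (-1:R)^(n-1-j) * Gr XX (2*n) (n-1-j) * XX ^ (e2 (n-1-j) + n*(2*n - (n-1-j))))
          = ((-1)^n * XX ^ (e2 n + n*n)) * (al (j+1) * Gr XX (2*n) (n+(j+1))) := by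
        intro j hj
        simp only [Finset.mem_range] at hj
        have hsn : j + 1 ≤ n := by omega
        have h1 : n + 1 + j = n + (j+1) := by omega
        have h2 : n - 1 - j = n - (j+1) := by omega
        rw [h1, h2, e2_plus n (j+1) hsn, e2_minus n (j+1) hsn]
        have hsym : Gr XX (2*n) (n-(j+1)) = Gr XX (2*n) (n+(j+1)) := by
          rw [Gr_symm (q := XX) ccX (2*n) (n-(j+1)) (by omega),
            show 2*n - (n-(j+1)) = n+(j+1) by omega]
        rw [hsym, neg_one_pow_sub n (j+1) hsn, al_succ (j+1) (by omega)]
        rw [pow_add (-1:R) n (j+1)]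
        rw [pow_add XX (e2 n + n*n) (e2 (j+1)), pow_add XX (e2 n + n*n) (e2 (j+1) + (j+1))]
        ring
      rw [hmid, Finset.sum_congr rfl hpair, ← Finset.mul_sum, ← mul_add] at hGZ
      have hunit : ((-1:R)^n * XX ^ (e2 n + n*n)) ≠ 0 := by
        apply mul_ne_zero
        · exact pow_ne_zero _ (by norm_num)
        · exact pow_ne_zero _ PowerSeries.X_ne_zero
      have hz := (mul_eq_zero.mp hGZ).resolve_left hunit
      rw [Finset.sum_range_succ' (fun s => al s * Gr XX (2*n) (n+s)) n]
      rw [add_comm] at hz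
      exact hz
    have hterm : ∀ s ∈ Finset.range (n+1),
        al s * ip (n-s) * ip (n+s) = ip (2*n) * (al s * Gr XX (2*n) (n+s)) := by
      intro s hs
      simp only [Finset.mem_range] at hs
      have hGr : Gr XX (2*n) (n+s) = qpow XX (2*n) * ip (n+s) * ip (n-s) := by
        have h := Gr_eq_ip (2*n) (n+s) (by omega)
        rw [show 2*n - (n+s) = n - s by omega] at h
        exact h
      rw [hGr]
      calc al s * ip (n-s) * ip (n+s)
          = (al s * ip (n-s) * ip (n+s)) * 1 := by ring
        _ = (al s * ip (n-s) * ip (n+s)) * (ip (2*n) * qpow XX (2*n)) := by rw [ip_mul_qpow]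
        _ = _ := by ring
    rw [Finset.sum_congr rfl hterm, ← Finset.mul_sum, hW, mul_zero]

/-! ### the iterated Bailey chain -/

noncomputable def bit : ℕ → ℕ → R
  | 0 => fun n => if n = 0 then 1 else 0
  | l+1 => fun n => ∑ r ∈ Finset.range (n+1), XX ^ (r*r) * bit l r * ip (n-r)

lemma bit_pair : ∀ l n : ℕ,
    bit l n = ∑ s ∈ Finset.range (n+1), XX ^ (l*(s*s)) * al s * ip (n-s) * ip (n+s) := by
  intro l
  induction l with
  | zero =>
    intro n
    show (if n = 0 then (1:R) else 0) = _
    rw [← unit_pair n]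
    refine Finset.sum_congr rfl fun s hs => ?_
    rw [zero_mul, pow_zero, one_mul]
  | succ l ih =>
    intro n
    show ∑ r ∈ Finset.range (n+1), XX ^ (r*r) * bit l r * ip (n-r) = _
    have h1 : ∀ r ∈ Finset.range (n+1), XX ^ (r*r) * bit l r * ip (n-r)
        = ∑ s ∈ Finset.range (r+1),
            XX ^ (l*(s*s)) * al s * (XX ^ (r*r) * ip (n-r) * ip (r-s) * ip (r+s)) := by
      intro r hr
      rw [ih r, Finset.mul_sum, Finset.sum_mul]
      refine Finset.sum_congr rfl fun s hs => ?_
      ring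
    rw [Finset.sum_congr rfl h1]
    have h2 : ∑ r ∈ Finset.range (n+1), ∑ s ∈ Finset.range (r+1),
          XX ^ (l*(s*s)) * al s * (XX ^ (r*r) * ip (n-r) * ip (r-s) * ip (r+s))
        = ∑ s ∈ Finset.range (n+1), ∑ r ∈ Finset.Ico s (n+1),
            XX ^ (l*(s*s)) * al s * (XX ^ (r*r) * ip (n-r) * ip (r-s) * ip (r+s)) := by
      simp only [Finset.range_eq_Ico]
      exact Finset.sum_Ico_Ico_comm 0 (n+1)
        (fun s r => XX ^ (l*(s*s)) * al s * (XX ^ (r*r) * ip (n-r) * ip (r-s) * ip (r+s))) |>.symm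
    rw [h2]
    refine Finset.sum_congr rfl fun s hs => ?_
    simp only [Finset.mem_range] at hs
    rw [← Finset.mul_sum]
    rw [Finset.Ico_add_one_right_eq_Icc]
    rw [bailey_step s n (by omega)]
    have hx : XX ^ (l*(s*s)) * XX ^ (s*s) = XX ^ ((l+1)*(s*s)) := by
      rw [← pow_add]
      congr 1
      ring
    calc XX ^ (l*(s*s)) * al s * (XX ^ (s*s) * ip (n-s) * ip (n+s))
        = (XX ^ (l*(s*s)) * XX ^ (s*s)) * al s * ip (n-s) * ip (n+s) := by ring
      _ = _ := by rw [hx]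

/-! ### tuple sums -/

def ext (m b : ℕ) (r : Fin m → Fin (b+1)) : ℕ → ℕ :=
  fun k => if h : k < m then (r ⟨k, h⟩ : ℕ) else 0

noncomputable def DecrSet (m b : ℕ) : Finset (Fin m → Fin (b+1)) :=
  Finset.univ.filter (fun r => ∀ i j : Fin m, i ≤ j → (r j : ℕ) ≤ (r i : ℕ))

noncomputable def TS (m b n : ℕ) : R :=
  ∑ r ∈ DecrSet m b,
    XX ^ (∑ i ∈ Finset.range m, (ext m b r i)^2) * ip (n - ext m b r 0)
      * ∏ i ∈ Finset.range m, ip (ext m b r i - ext m b r (i+1))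

lemma bit_one (n : ℕ) : bit 1 n = ip n := by
  show ∑ r ∈ Finset.range (n+1), XX ^ (r*r) * (if r = 0 then (1:R) else 0) * ip (n-r) = ip n
  rw [Finset.sum_eq_single 0]
  · simp
  · intro b _ hb
    rw [if_neg hb]
    ring
  · intro h
    simp at h

lemma TS_zero (n : ℕ) : TS 0 n n = ip n := by
  rw [TS, DecrSet]
  rw [Finset.filter_true_of_mem (fun r _ => by intro i j _; exact absurd i.2 (by omega))]
  rw [Finset.univ_unique, Finset.sum_singleton]
  simp [ext]

lemma ext_zero_lt (m b : ℕ) (hm : 0 < m) (r : Fin m → Fin (b+1)) :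
    ext m b r 0 = (r ⟨0, hm⟩ : ℕ) := by
  rw [ext, dif_pos hm]

/-- splitting off the first entry of a decreasing tuple -/
lemma TS_succ (m n : ℕ) :
    TS (m+1) n n = ∑ k ∈ Finset.range (n+1), XX ^ (k*k) * ip (n-k) * TS m k k := by
  have hinner : ∀ k, XX ^ (k*k) * ip (n-k) * TS m k k
      = ∑ t ∈ DecrSet m k,
          XX ^ (k*k) * ip (n-k) *
            (XX ^ (∑ i ∈ Finset.range m, (ext m k t i)^2) * ip (k - ext m k t 0)
              * ∏ i ∈ Finset.range m, ip (ext m k t i - ext m k t (i+1))) := by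
    intro k
    rw [TS, Finset.mul_sum]
  rw [Finset.sum_congr rfl (fun k _ => hinner k), Finset.sum_sigma']
  rw [TS]
  refine Finset.sum_bij' (i := ?_) (j := ?_) ?_ ?_ ?_ ?_ ?_
  · -- i : decreasing (m+1)-tuple → sigma
    exact fun r hr => ⟨(r 0 : ℕ), fun i : Fin m =>
      ⟨(r i.succ : ℕ), by
        have hd : ∀ i j : Fin (m+1), i ≤ j → (r j : ℕ) ≤ (r i : ℕ) := by
          have := (Finset.mem_filter.mp hr).2
          exact this
        have h1 : (r i.succ : ℕ) ≤ (r 0 : ℕ) := hd 0 i.succ (Fin.zero_le _)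
        omega⟩⟩
  · -- j : sigma → (m+1)-tuple
    exact fun p hp => Fin.cons
      (⟨p.1, by
        have := (Finset.mem_sigma.mp hp).1
        simpa [Finset.mem_range] using this⟩)
      (fun i => ⟨(p.2 i : ℕ), by
        have h1 : (p.2 i : ℕ) < p.1 + 1 := (p.2 i).2
        have := (Finset.mem_sigma.mp hp).1
        simp only [Finset.mem_range] at this
        omega⟩)
  · -- membership forward
    intro r hr
    rw [Finset.mem_sigma]
    constructor
    · simp only [Finset.mem_range]; exact (r 0).2
    · rw [DecrSet, Finset.mem_filter]
      refine ⟨Finset.mem_univ _, ?_⟩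
      intro i j hij
      have hd := (Finset.mem_filter.mp hr).2
      exact hd i.succ j.succ (by simpa using hij)
  · -- membership backward
    intro p hp
    rw [DecrSet, Finset.mem_filter]
    refine ⟨Finset.mem_univ _, ?_⟩
    intro i j hij
    have hd := (Finset.mem_sigma.mp hp).2
    rw [DecrSet, Finset.mem_filter] at hd
    induction j using Fin.cases with
    | zero =>
      have : i = 0 := le_antisymm hij (Fin.zero_le i)
      subst this
      exact le_rfl
    | succ j =>
      induction i using Fin.cases with
      | zero =>
        simp only [Fin.cons_zero, Fin.cons_succ]
        have h1 : (p.2 j : ℕ) < p.1 + 1 := (p.2 j).2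
        omega
      | succ i =>
        simp only [Fin.cons_succ]
        exact hd.2 i j (by
          have := hij
          rwa [Fin.succ_le_succ_iff] at this)
  · -- left inverse
    intro r hr
    funext x
    induction x using Fin.cases with
    | zero => simp
    | succ i => simp
  · -- right inverse
    intro p hp
    refine Sigma.ext ?_ ?_
    · simp
    · refine HEq.symm (Function.hfunext rfl ?_)
      intro i i' hii
      have : i = i' := by exact eq_of_heq hii
      subst this
      apply Fin.heq_ext_iff ?_ |>.mpr
      · simp
      · simp
  · -- term equality
    intro r hr
    have hd : ∀ i j : Fin (m+1), i ≤ j → (r j : ℕ) ≤ (r i : ℕ) := (Finset.mem_filter.mp hr).2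
    have hext : ∀ i : ℕ, ext (m+1) n r (i+1)
        = ext m (r 0 : ℕ) (fun i : Fin m => (⟨(r i.succ : ℕ), by
            have h1 : (r i.succ : ℕ) ≤ (r 0 : ℕ) := hd 0 i.succ (Fin.zero_le _)
            omega⟩ : Fin ((r 0 : ℕ)+1))) i := by
      intro i
      by_cases h : i < m
      · rw [ext, dif_pos (by omega : i + 1 < m + 1), ext, dif_pos h]
        rfl
      · rw [ext, dif_neg (by omega : ¬ (i + 1 < m + 1)), ext, dif_neg h]
    have hext0 : ext (m+1) n r 0 = (r 0 : ℕ) := by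
      rw [ext, dif_pos (by omega)]
      rfl
    rw [Finset.sum_range_succ' (fun i => (ext (m+1) n r i)^2) m]
    rw [Finset.prod_range_succ' (fun i => ip (ext (m+1) n r i - ext (m+1) n r (i+1))) m]
    simp only [hext, hext0]
    rw [pow_add, show ((r 0 : ℕ))^2 = (r 0 : ℕ)*(r 0 : ℕ) from pow_two _]
    ring

lemma TS_eq_bit : ∀ m n : ℕ, TS m n n = bit (m+1) n := by
  intro m
  induction m with
  | zero => intro n; rw [TS_zero, bit_one]
  | succ m ih =>
    intro n
    rw [TS_succ]
    show _ = ∑ r ∈ Finset.range (n+1), XX ^ (r*r) * bit (m+1) r * ip (n-r)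
    refine Finset.sum_congr rfl fun k _ => ?_
    rw [ih k]
    ring

lemma cg_ip {d a b : ℕ} (ha : d ≤ a) (hb : d ≤ b) : Cg d (ip a) (ip b) := by
  have h := cg_qpow_inv (c := 1) le_rfl ha hb (d := d)
  simpa [pow_one, ip] using h

lemma prod_inv {ι : Type*} (s : Finset ι) (f : ι → R) :
    (∏ i ∈ s, f i)⁻¹ = ∏ i ∈ s, (f i)⁻¹ := by
  classical
  induction s using Finset.cons_induction with
  | empty => simp
  | cons a s ha ih =>
    rw [Finset.prod_cons, Finset.prod_cons, PowerSeries.mul_inv_rev, ih, mul_comm]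

lemma mem_DecrSet {m b : ℕ} {r : Fin m → Fin (b+1)} :
    r ∈ DecrSet m b ↔ ∀ i j : Fin m, i ≤ j → (r j : ℕ) ≤ (r i : ℕ) := by
  rw [DecrSet, Finset.mem_filter]
  simp

lemma decr_le_ext0 {m b : ℕ} {r : Fin m → Fin (b+1)} (hr : r ∈ DecrSet m b) (i : Fin m) :
    (r i : ℕ) ≤ ext m b r 0 := by
  have hm : 0 < m := i.pos
  rw [ext_zero_lt m b hm]
  exact (mem_DecrSet.mp hr) ⟨0, hm⟩ i (by simp [Fin.le_def])

lemma reindex_sum (m d n : ℕ) (hdn : d ≤ n) :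
    ∑ r ∈ (DecrSet m n).filter (fun r => ext m n r 0 ≤ d),
        XX ^ (∑ i ∈ Finset.range m, (ext m n r i)^2)
          * ∏ i ∈ Finset.range m, ip (ext m n r i - ext m n r (i+1))
      = ∑ t ∈ DecrSet m d,
          XX ^ (∑ i ∈ Finset.range m, (ext m d t i)^2)
            * ∏ i ∈ Finset.range m, ip (ext m d t i - ext m d t (i+1)) := by
  have hext_eq : ∀ r ∈ (DecrSet m n).filter (fun r => ext m n r 0 ≤ d), ∀ k : ℕ,
      ext m d (fun i : Fin m => (⟨min (r i : ℕ) d, by omega⟩ : Fin (d+1))) k = ext m n r k := by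
    intro r hr k
    simp only [Finset.mem_filter] at hr
    by_cases h : k < m
    · rw [ext, dif_pos h, ext, dif_pos h]
      have h1 : (r ⟨k, h⟩ : ℕ) ≤ ext m n r 0 := decr_le_ext0 hr.1 ⟨k, h⟩
      show min (r ⟨k,h⟩ : ℕ) d = (r ⟨k,h⟩ : ℕ)
      omega
    · rw [ext, dif_neg h, ext, dif_neg h]
  refine Finset.sum_nbij'
    (i := fun r (i : Fin m) => (⟨min (r i : ℕ) d, by omega⟩ : Fin (d+1)))
    (j := fun t (i : Fin m) => (⟨(t i : ℕ), by have := (t i).2; omega⟩ : Fin (n+1)))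
    ?_ ?_ ?_ ?_ ?_
  · intro r hr
    simp only [Finset.mem_filter] at hr
    rw [mem_DecrSet]
    intro i j hij
    have := (mem_DecrSet.mp hr.1) i j hij
    simp only
    omega
  · intro t ht
    rw [Finset.mem_filter]
    constructor
    · rw [mem_DecrSet]
      intro i j hij
      have := (mem_DecrSet.mp ht) i j hij
      simpa using this
    · by_cases hm : 0 < m
      · rw [ext_zero_lt m n hm]
        have : (t ⟨0, hm⟩ : ℕ) ≤ d := by have := (t ⟨0,hm⟩).2; omega
        simpa using this
      · rw [ext, dif_neg (by omega)]
        omega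
  · intro r hr
    funext i
    simp only [Finset.mem_filter] at hr
    apply Fin.ext
    have h1 : (r i : ℕ) ≤ ext m n r 0 := decr_le_ext0 hr.1 i
    show min (r i : ℕ) d = (r i : ℕ)
    omega
  · intro t ht
    funext i
    apply Fin.ext
    show min (t i : ℕ) d = (t i : ℕ)
    have := (t i).2
    omega
  · intro r hr
    have h := hext_eq r hr
    congr 1
    · congr 1
      exact Finset.sum_congr rfl fun i _ => by rw [h i]
    · exact Finset.prod_congr rfl fun i _ => by rw [h i, h (i+1)]

set_option maxHeartbeats 2000000 in
/-- step 1: the bounded tuple sum is congruent to `qpow d * TS m n n`, `n = 2d+1` -/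
lemma step1 (m d : ℕ) :
    Cg d
      (∑ r ∈ DecrSet m d,
        XX ^ (∑ i ∈ Finset.range m, (ext m d r i)^2)
          * ∏ i ∈ Finset.range m, ip (ext m d r i - ext m d r (i+1)))
      (qpow XX d * TS m (2*d+1) (2*d+1)) := by
  set n := 2*d+1 with hn
  rw [TS, Finset.mul_sum]
  have hsplit := Finset.sum_filter_add_sum_filter_not (DecrSet m n)
    (fun r => ext m n r 0 ≤ d)
    (fun r => qpow XX d * (XX ^ (∑ i ∈ Finset.range m, (ext m n r i)^2) * ip (n - ext m n r 0)
      * ∏ i ∈ Finset.range m, ip (ext m n r i - ext m n r (i+1))))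
  rw [← hsplit]
  have hbig : Cg d
      (∑ r ∈ (DecrSet m n).filter (fun r => ¬ (ext m n r 0 ≤ d)),
        qpow XX d * (XX ^ (∑ i ∈ Finset.range m, (ext m n r i)^2) * ip (n - ext m n r 0)
          * ∏ i ∈ Finset.range m, ip (ext m n r i - ext m n r (i+1)))) 0 := by
    have := Cg.sum (d := d) (s := (DecrSet m n).filter (fun r => ¬ (ext m n r 0 ≤ d)))
      (g := fun _ => (0:R))
      (f := fun r => qpow XX d * (XX ^ (∑ i ∈ Finset.range m, (ext m n r i)^2) * ip (n - ext m n r 0)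
        * ∏ i ∈ Finset.range m, ip (ext m n r i - ext m n r (i+1))))
      (fun r hr => by
        simp only [Finset.mem_filter] at hr
        have hr0 : d < ext m n r 0 := by omega
        have hm0 : 0 < m := by
          by_contra hm
          have : ext m n r 0 = 0 := by rw [ext, dif_neg (by omega)]
          omega
        have hle : (ext m n r 0)^2 ≤ ∑ i ∈ Finset.range m, (ext m n r i)^2 :=
          Finset.single_le_sum (f := fun i => (ext m n r i)^2) (fun _ _ => Nat.zero_le _)
            (Finset.mem_range.mpr hm0)
        have hdvd : (XX:R)^(d+1) ∣ XX ^ (∑ i ∈ Finset.range m, (ext m n r i)^2) :=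
          pow_dvd_pow _ (by nlinarith)
        rw [Cg, sub_zero]
        exact ((hdvd.mul_right _).mul_right _).mul_left _)
    simpa using this
  have hcong : Cg d
      (∑ r ∈ (DecrSet m n).filter (fun r => ext m n r 0 ≤ d),
        qpow XX d * (XX ^ (∑ i ∈ Finset.range m, (ext m n r i)^2) * ip (n - ext m n r 0)
          * ∏ i ∈ Finset.range m, ip (ext m n r i - ext m n r (i+1))))
      (∑ r ∈ (DecrSet m n).filter (fun r => ext m n r 0 ≤ d),
        XX ^ (∑ i ∈ Finset.range m, (ext m n r i)^2)
          * ∏ i ∈ Finset.range m, ip (ext m n r i - ext m n r (i+1))) := by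
    refine Cg.sum fun r hr => ?_
    simp only [Finset.mem_filter] at hr
    have h1 : Cg d (qpow XX d * ip (n - ext m n r 0)) 1 := by
      have h2 : Cg d (ip (n - ext m n r 0)) (ip d) := cg_ip (by omega) le_rfl
      have h3 := (Cg.rfl (d := d) (f := qpow XX d)).mul h2
      exact h3.trans (Cg.of_eq (qpow_mul_ip d))
    have h5 := h1.mul (Cg.rfl (d := d)
      (f := XX ^ (∑ i ∈ Finset.range m, (ext m n r i)^2)
        * ∏ i ∈ Finset.range m, ip (ext m n r i - ext m n r (i+1))))
    refine (Cg.of_eq ?_).trans (h5.trans (Cg.of_eq (one_mul _)))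
    ring
  have hsmall := hcong.trans (Cg.of_eq (reindex_sum m d n (by omega)))
  have hfin := hsmall.add hbig
  rw [add_zero] at hfin
  exact hfin.symm

/-- step 2: truncating the Bailey-pair side -/
lemma step2 (m d : ℕ) :
    Cg d (qpow XX d * TS m (2*d+1) (2*d+1))
      (ip d * ∑ s ∈ Finset.range (d+1), XX ^ ((m+1)*(s*s)) * al s) := by
  set n := 2*d+1 with hn
  rw [TS_eq_bit, bit_pair]
  have hsr : n + 1 = (d+1) + (d+1) := by omega
  rw [hsr, Finset.sum_range_add, mul_add]
  have cB : Cg d (qpow XX d * ∑ j ∈ Finset.range (d+1),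
      XX ^ ((m+1)*((d+1+j)*(d+1+j))) * al (d+1+j) * ip (n-(d+1+j)) * ip (n+(d+1+j))) 0 := by
    have h0 : Cg d (∑ j ∈ Finset.range (d+1),
        XX ^ ((m+1)*((d+1+j)*(d+1+j))) * al (d+1+j) * ip (n-(d+1+j)) * ip (n+(d+1+j))) 0 := by
      have := Cg.sum (d := d) (s := Finset.range (d+1)) (g := fun _ => (0:R))
        (f := fun j => XX ^ ((m+1)*((d+1+j)*(d+1+j))) * al (d+1+j) * ip (n-(d+1+j)) * ip (n+(d+1+j)))
        (fun j hj => by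
          rw [Cg, sub_zero]
          have hdvd : (XX:R)^(d+1) ∣ XX ^ ((m+1)*((d+1+j)*(d+1+j))) :=
            pow_dvd_pow _ (by nlinarith)
          exact ((hdvd.mul_right _).mul_right _).mul_right _)
      simpa using this
    have := (Cg.rfl (d := d) (f := qpow XX d)).mul h0
    simpa using this
  have cA : Cg d (qpow XX d * ∑ s ∈ Finset.range (d+1),
      XX ^ ((m+1)*(s*s)) * al s * ip (n-s) * ip (n+s))
      (ip d * ∑ s ∈ Finset.range (d+1), XX ^ ((m+1)*(s*s)) * al s) := by
    rw [Finset.mul_sum, Finset.mul_sum]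
    refine Cg.sum fun s hs => ?_
    simp only [Finset.mem_range] at hs
    have t1 : Cg d (ip (n-s)) (ip d) := cg_ip (by omega) le_rfl
    have t2 : Cg d (ip (n+s)) (ip d) := cg_ip (by omega) le_rfl
    have c := ((Cg.rfl (d := d) (f := XX ^ ((m+1)*(s*s)) * al s)).mul t1).mul t2
    have c2 := (Cg.rfl (d := d) (f := qpow XX d)).mul c
    refine c2.trans (Cg.of_eq ?_)
    have : qpow XX d * (XX ^ ((m+1)*(s*s)) * al s * ip d * ip d)
        = (qpow XX d * ip d) * (XX ^ ((m+1)*(s*s)) * al s * ip d) := by ring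
    rw [this, qpow_mul_ip, one_mul]
    ring
  have := cA.add cB
  rw [add_zero] at this
  exact this

/-! ### Jacobi triple product side -/

lemma e2_sum : ∀ M : ℕ, ∑ t ∈ Finset.range M, t = e2 M := by
  intro M
  induction M with
  | zero => simp [e2]
  | succ k ih => rw [Finset.sum_range_succ, ih]; rfl

lemma Gr_eq_inv (hq : constantCoeff (R := ℚ) q = 0) (M t : ℕ) (h : t ≤ M) :
    Gr q M t = qpow q M * (qpow q t)⁻¹ * (qpow q (M-t))⁻¹ := by
  have h1 := Gr_formula (q := q) M t h
  have h2 : Gr q M t = Gr q M t * (qpow q t * (qpow q t)⁻¹) * (qpow q (M-t) * (qpow q (M-t))⁻¹) := by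
    rw [qpow_mul_inv hq, qpow_mul_inv hq]; ring
  rw [h2]
  calc Gr q M t * (qpow q t * (qpow q t)⁻¹) * (qpow q (M-t) * (qpow q (M-t))⁻¹)
      = (Gr q M t * (qpow q t * qpow q (M-t))) * (qpow q t)⁻¹ * (qpow q (M-t))⁻¹ := by ring
    _ = _ := by rw [h1]

lemma jtp_prod (m M : ℕ) :
    ∏ t ∈ Finset.range (2*M), ((XX^(2*m+3))^M - XX^(m+2) * (XX^(2*m+3))^t)
      = ((-1)^M * XX^((2*m+3)*e2 M + (m+2)*M + (2*m+3)*M*M)) *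
        ((∏ u ∈ Finset.range M, (1 - XX^((2*m+3)*u+(m+1))))
          * ∏ u ∈ Finset.range M, (1 - XX^((2*m+3)*u+(m+2)))) := by
  rw [show 2*M = M + M by ring, Finset.prod_range_add]
  have hP1 : ∏ t ∈ Finset.range M, ((XX^(2*m+3))^M - XX^(m+2) * (XX^(2*m+3))^t)
      = ((-1)^M * XX^((2*m+3)*e2 M + (m+2)*M)) *
        ∏ u ∈ Finset.range M, (1 - XX^((2*m+3)*u+(m+1))) := by
    have hterm : ∀ t ∈ Finset.range M,
        ((XX^(2*m+3))^M - XX^(m+2) * (XX^(2*m+3))^t)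
          = (-1) * (XX^((2*m+3)*t+(m+2)) * (1 - XX^((2*m+3)*(M-1-t)+(m+1)))) := by
      intro t ht
      simp only [Finset.mem_range] at ht
      obtain ⟨v, rfl⟩ : ∃ v, M = t+1+v := ⟨M - (t+1), by omega⟩
      rw [show t+1+v-1-t = v by omega]
      ring
    rw [Finset.prod_congr rfl hterm, Finset.prod_mul_distrib, Finset.prod_mul_distrib]
    rw [Finset.prod_const, Finset.card_range]
    rw [Finset.prod_pow_eq_pow_sum]
    rw [Finset.sum_add_distrib, ← Finset.mul_sum, e2_sum, Finset.sum_const, Finset.card_range,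
      smul_eq_mul]
    rw [Finset.prod_range_reflect (fun u => 1 - XX^((2*m+3)*u+(m+1))) M]
    rw [show M * (m+2) = (m+2) * M by ring]
    ring
  have hP2 : ∏ u ∈ Finset.range M, ((XX^(2*m+3))^M - XX^(m+2) * (XX^(2*m+3))^(M+u))
      = XX^((2*m+3)*M*M) * ∏ u ∈ Finset.range M, (1 - XX^((2*m+3)*u+(m+2))) := by
    have hterm : ∀ u ∈ Finset.range M,
        ((XX^(2*m+3))^M - XX^(m+2) * (XX^(2*m+3))^(M+u))
          = XX^((2*m+3)*M) * (1 - XX^((2*m+3)*u+(m+2))) := by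
      intro u _
      ring
    rw [Finset.prod_congr rfl hterm, Finset.prod_mul_distrib, Finset.prod_const,
      Finset.card_range, ← pow_mul]
  rw [hP1, hP2]
  ring

lemma ex_plus (m M s : ℕ) (h : s ≤ M) :
    (2*m+3)*e2 (M+s) + (m+2)*(M+s) + (2*m+3)*M*(2*M-(M+s))
      = ((2*m+3)*e2 M + (m+2)*M + (2*m+3)*M*M) + ((m+1)*(s*s) + (e2 s + s)) := by
  have hz : (((2*m+3)*e2 (M+s) + (m+2)*(M+s) + (2*m+3)*M*(2*M-(M+s)) : ℕ) : ℤ)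
      = ((((2*m+3)*e2 M + (m+2)*M + (2*m+3)*M*M) + ((m+1)*(s*s) + (e2 s + s)) : ℕ) : ℤ) := by
    push_cast [Nat.cast_sub (by omega : M + s ≤ 2*M)]
    have hp := e2_cast (M+s)
    have hm := e2_cast M
    have hs := e2_cast s
    push_cast at hp
    have h2 : (2:ℤ) * ((2*(m:ℤ)+3)*e2 (M+s) + ((m:ℤ)+2)*(M+s) + (2*(m:ℤ)+3)*M*(2*(M:ℤ)-(M+s)))
        = 2 * (((2*(m:ℤ)+3)*e2 M + ((m:ℤ)+2)*M + (2*(m:ℤ)+3)*M*M) + (((m:ℤ)+1)*(s*s) + ((e2 s : ℤ) + s))) := by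
      linear_combination (2*(m:ℤ)+3) * hp - (2*(m:ℤ)+3) * hm - hs
    linarith
  exact_mod_cast hz

lemma ex_minus (m M s : ℕ) (h : s ≤ M) :
    (2*m+3)*e2 (M-s) + (m+2)*(M-s) + (2*m+3)*M*(2*M-(M-s))
      = ((2*m+3)*e2 M + (m+2)*M + (2*m+3)*M*M) + ((m+1)*(s*s) + e2 s) := by
  have hz : (((2*m+3)*e2 (M-s) + (m+2)*(M-s) + (2*m+3)*M*(2*M-(M-s)) : ℕ) : ℤ)
      = ((((2*m+3)*e2 M + (m+2)*M + (2*m+3)*M*M) + ((m+1)*(s*s) + e2 s) : ℕ) : ℤ) := by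
    push_cast [Nat.cast_sub (by omega : s ≤ M), Nat.cast_sub (by omega : M - s ≤ 2*M)]
    have hp := e2_cast (M-s)
    have hm := e2_cast M
    have hs := e2_cast s
    rw [Nat.cast_sub (by omega : s ≤ M)] at hp
    have h2 : (2:ℤ) * ((2*(m:ℤ)+3)*e2 (M-s) + ((m:ℤ)+2)*((M:ℤ)-s) + (2*(m:ℤ)+3)*M*(2*(M:ℤ)-((M:ℤ)-s)))
        = 2 * (((2*(m:ℤ)+3)*e2 M + ((m:ℤ)+2)*M + (2*(m:ℤ)+3)*M*M) + (((m:ℤ)+1)*(s*s) + (e2 s : ℤ))) := by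
      linear_combination (2*(m:ℤ)+3) * hp - (2*(m:ℤ)+3) * hm - hs
    linarith
  exact_mod_cast hz

lemma ccQQ (m : ℕ) : constantCoeff (R := ℚ) (XX^(2*m+3)) = 0 :=
  constantCoeff_X_pow_eq_zero (by omega)

lemma jtp_sum (m M : ℕ) :
    ∑ j ∈ Finset.range (2*M+1),
        (-1:R)^j * Gr (XX^(2*m+3)) (2*M) j
          * XX^((2*m+3)*e2 j + (m+2)*j + (2*m+3)*M*(2*M-j))
      = ((-1)^M * XX^((2*m+3)*e2 M + (m+2)*M + (2*m+3)*M*M)) *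
          (Gr (XX^(2*m+3)) (2*M) M
            + ∑ j ∈ Finset.range M,
                (XX^((m+1)*((j+1)*(j+1))) * al (j+1)) * Gr (XX^(2*m+3)) (2*M) (M+1+j)) := by
  rw [fold_sum M (fun j => (-1:R)^j * Gr (XX^(2*m+3)) (2*M) j
    * XX^((2*m+3)*e2 j + (m+2)*j + (2*m+3)*M*(2*M-j)))]
  have hmid : (-1:R)^M * Gr (XX^(2*m+3)) (2*M) M
        * XX^((2*m+3)*e2 M + (m+2)*M + (2*m+3)*M*(2*M-M))
      = ((-1)^M * XX^((2*m+3)*e2 M + (m+2)*M + (2*m+3)*M*M)) * Gr (XX^(2*m+3)) (2*M) M := by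
    rw [show 2*M - M = M by omega]
    ring
  rw [hmid]
  have hpair : ∀ j ∈ Finset.range M,
      ((-1:R)^(M+1+j) * Gr (XX^(2*m+3)) (2*M) (M+1+j)
          * XX^((2*m+3)*e2 (M+1+j) + (m+2)*(M+1+j) + (2*m+3)*M*(2*M-(M+1+j)))
        + (-1:R)^(M-1-j) * Gr (XX^(2*m+3)) (2*M) (M-1-j)
          * XX^((2*m+3)*e2 (M-1-j) + (m+2)*(M-1-j) + (2*m+3)*M*(2*M-(M-1-j))))
      = ((-1)^M * XX^((2*m+3)*e2 M + (m+2)*M + (2*m+3)*M*M)) *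
          ((XX^((m+1)*((j+1)*(j+1))) * al (j+1)) * Gr (XX^(2*m+3)) (2*M) (M+1+j)) := by
    intro j hj
    simp only [Finset.mem_range] at hj
    have hsM : j + 1 ≤ M := by omega
    rw [show M+1+j = M+(j+1) by omega, show M-1-j = M-(j+1) by omega]
    rw [ex_plus m M (j+1) hsM, ex_minus m M (j+1) hsM]
    have hsym : Gr (XX^(2*m+3)) (2*M) (M-(j+1)) = Gr (XX^(2*m+3)) (2*M) (M+(j+1)) := by
      rw [Gr_symm (q := XX^(2*m+3)) (ccQQ m) (2*M) (M-(j+1)) (by omega),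
        show 2*M - (M-(j+1)) = M+(j+1) by omega]
    rw [hsym, neg_one_pow_sub M (j+1) hsM, al_succ (j+1) (by omega)]
    rw [pow_add (-1:R) M (j+1)]
    rw [pow_add XX ((2*m+3)*e2 M + (m+2)*M + (2*m+3)*M*M) ((m+1)*((j+1)*(j+1)) + (e2 (j+1) + (j+1))),
      pow_add XX ((2*m+3)*e2 M + (m+2)*M + (2*m+3)*M*M) ((m+1)*((j+1)*(j+1)) + e2 (j+1))]
    rw [pow_add XX ((m+1)*((j+1)*(j+1))) (e2 (j+1) + (j+1)),
      pow_add XX ((m+1)*((j+1)*(j+1))) (e2 (j+1)),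
      pow_add XX (e2 (j+1)) (j+1)]
    ring
  rw [Finset.sum_congr rfl hpair, ← Finset.mul_sum, ← mul_add]

lemma jtp_finite (m M : ℕ) :
    (∏ u ∈ Finset.range M, (1 - XX^((2*m+3)*u+(m+1))))
        * ∏ u ∈ Finset.range M, (1 - XX^((2*m+3)*u+(m+2)))
      = Gr (XX^(2*m+3)) (2*M) M
        + ∑ j ∈ Finset.range M,
            (XX^((m+1)*((j+1)*(j+1))) * al (j+1)) * Gr (XX^(2*m+3)) (2*M) (M+1+j) := by
  have h := hqbin (q := XX^(2*m+3)) (XX^(m+2)) ((XX^(2*m+3))^M) (2*M)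
  have hterm : ∀ j ∈ Finset.range (2*M+1),
      (-1:R)^j * Gr (XX^(2*m+3)) (2*M) j * (XX^(2*m+3))^(e2 j) * (XX^(m+2))^j
          * ((XX^(2*m+3))^M)^(2*M-j)
        = (-1:R)^j * Gr (XX^(2*m+3)) (2*M) j
            * XX^((2*m+3)*e2 j + (m+2)*j + (2*m+3)*M*(2*M-j)) := fun j _ => by ring
  rw [Finset.sum_congr rfl hterm, jtp_sum, jtp_prod] at h
  have hne : ((-1:R)^M * XX^((2*m+3)*e2 M + (m+2)*M + (2*m+3)*M*M)) ≠ 0 := by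
    apply mul_ne_zero
    · exact pow_ne_zero _ (by norm_num)
    · exact pow_ne_zero _ PowerSeries.X_ne_zero
  exact mul_left_cancel₀ hne h

set_option maxHeartbeats 1000000 in
/-- step 3: the truncated Jacobi triple product -/
lemma step3 (m d : ℕ) :
    Cg d (∑ s ∈ Finset.range (d+1), XX ^ ((m+1)*(s*s)) * al s)
      (qpow (XX^(2*m+3)) (d+1) *
        ∏ j ∈ Finset.range (d+1),
          ((1 - XX ^ ((2*m+3)*j + (m+1))) * (1 - XX ^ ((2*m+3)*j + (m+2))))) := by
  set M := 2*d+1 with hM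
  set QQ := XX^(2*m+3) with hQQ
  have hc : 1 ≤ 2*m+3 := by omega
  set T := ∑ s ∈ Finset.range (d+1), XX ^ ((m+1)*(s*s)) * al s with hT
  -- reshape the Gr-sum
  have hshape : ∑ s ∈ Finset.range (M+1), (XX^((m+1)*(s*s)) * al s) * Gr QQ (2*M) (M+s)
      = Gr QQ (2*M) M
        + ∑ j ∈ Finset.range M, (XX^((m+1)*((j+1)*(j+1))) * al (j+1)) * Gr QQ (2*M) (M+1+j) := by
    rw [Finset.sum_range_succ' (fun s => (XX^((m+1)*(s*s)) * al s) * Gr QQ (2*M) (M+s)) M]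
    rw [add_comm]
    congr 1
    · simp [al_zero]
    · refine Finset.sum_congr rfl fun j _ => ?_
      rw [show M + (j+1) = M+1+j by omega]
  -- congruence for the Gr-sum
  have hA1 : Cg d (∑ s ∈ Finset.range (M+1), (XX^((m+1)*(s*s)) * al s) * Gr QQ (2*M) (M+s))
      (T * (qpow QQ d)⁻¹) := by
    have hsr : M + 1 = (d+1) + (d+1) := by omega
    rw [hsr, Finset.sum_range_add]
    have cTail : Cg d (∑ j ∈ Finset.range (d+1),
        (XX^((m+1)*((d+1+j)*(d+1+j))) * al (d+1+j)) * Gr QQ (2*M) (M+(d+1+j))) 0 := by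
      have := Cg.sum (d := d) (s := Finset.range (d+1)) (g := fun _ => (0:R))
        (f := fun j => (XX^((m+1)*((d+1+j)*(d+1+j))) * al (d+1+j)) * Gr QQ (2*M) (M+(d+1+j)))
        (fun j hj => by
          rw [Cg, sub_zero]
          have hdvd : (XX:R)^(d+1) ∣ XX ^ ((m+1)*((d+1+j)*(d+1+j))) :=
            pow_dvd_pow _ (by nlinarith)
          exact (hdvd.mul_right _).mul_right _)
      simpa using this
    have cFront : Cg d (∑ s ∈ Finset.range (d+1),
        (XX^((m+1)*(s*s)) * al s) * Gr QQ (2*M) (M+s)) (T * (qpow QQ d)⁻¹) := by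
      rw [hT, Finset.sum_mul]
      refine Cg.sum fun s hs => ?_
      simp only [Finset.mem_range] at hs
      have hGr : Gr QQ (2*M) (M+s)
          = qpow QQ (2*M) * (qpow QQ (M+s))⁻¹ * (qpow QQ (M-s))⁻¹ := by
        have h := Gr_eq_inv (q := QQ) (ccQQ m) (2*M) (M+s) (by omega)
        rwa [show 2*M - (M+s) = M - s by omega] at h
      have c1 : Cg d (qpow QQ (2*M)) (qpow QQ d) := cg_qpow hc (by omega) le_rfl
      have c2 : Cg d (qpow QQ (M+s))⁻¹ (qpow QQ d)⁻¹ := cg_qpow_inv hc (by omega) le_rfl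
      have c3 : Cg d (qpow QQ (M-s))⁻¹ (qpow QQ d)⁻¹ := cg_qpow_inv hc (by omega) le_rfl
      have cGr : Cg d (Gr QQ (2*M) (M+s)) (qpow QQ d)⁻¹ := by
        refine (Cg.of_eq hGr).trans (((c1.mul c2).mul c3).trans (Cg.of_eq ?_))
        rw [mul_assoc, ← mul_comm ((qpow QQ d)⁻¹ * (qpow QQ d)⁻¹) (qpow QQ d)]
        rw [mul_assoc, qpow_inv_mul (ccQQ m), mul_one]
      exact (Cg.rfl (d := d) (f := XX^((m+1)*(s*s)) * al s)).mul cGr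
    have := cFront.add cTail
    rwa [add_zero] at this
  have hfin := jtp_finite m M
  rw [← hQQ, ← hshape] at hfin
  have cCM := (Cg.of_eq hfin).trans hA1
  set A := qpow QQ (d+1) with hA
  have c2 := (Cg.rfl (d := d) (f := A)).mul cCM
  have c3 : Cg d (A * (T * (qpow QQ d)⁻¹)) T := by
    have cA : Cg d A (qpow QQ d) := cg_qpow hc (by omega) le_rfl
    refine (cA.mul (Cg.rfl (d := d) (f := T * (qpow QQ d)⁻¹))).trans (Cg.of_eq ?_)
    rw [show qpow QQ d * (T * (qpow QQ d)⁻¹) = (qpow QQ d * (qpow QQ d)⁻¹) * T by ring,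
      qpow_mul_inv (ccQQ m), one_mul]
  have c4 : Cg d (A * ((∏ u ∈ Finset.range M, (1 - XX^((2*m+3)*u+(m+1))))
      * ∏ u ∈ Finset.range M, (1 - XX^((2*m+3)*u+(m+2)))))
      (A * ∏ j ∈ Finset.range (d+1),
        ((1 - XX ^ ((2*m+3)*j + (m+1))) * (1 - XX ^ ((2*m+3)*j + (m+2))))) := by
    refine (Cg.rfl (d := d) (f := A)).mul ?_
    have hsplit : ∀ c : ℕ, Cg d (∏ u ∈ Finset.range M, (1 - XX^((2*m+3)*u+(m+1+c))))
        (∏ u ∈ Finset.range (d+1), (1 - XX^((2*m+3)*u+(m+1+c)))) := by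
      intro c
      rw [show M = (d+1) + d by omega, Finset.prod_range_add]
      have ctail : Cg d (∏ j ∈ Finset.range d, (1 - XX^((2*m+3)*((d+1)+j)+(m+1+c)))) 1 := by
        have := Cg.prod (d := d) (s := Finset.range d) (g := fun _ => (1:R))
          (f := fun j => 1 - XX^((2*m+3)*((d+1)+j)+(m+1+c)))
          (fun j hj => cg_one_sub_xpow (by nlinarith))
        simpa using this
      have := (Cg.rfl (d := d) (f := ∏ u ∈ Finset.range (d+1), (1 - XX^((2*m+3)*u+(m+1+c))))).mul ctail
      simpa using this
    have h1 := hsplit 0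
    have h2 := hsplit 1
    simp only [show m+1+0 = m+1 by omega, show m+1+1 = m+2 by omega] at h1 h2
    refine (h1.mul h2).trans (Cg.of_eq ?_)
    rw [← Finset.prod_mul_distrib]
  exact ((c2.trans c3).symm).trans c4

end AG

open AG in
/-- The Andrews–Gordon identity for `i = m+1`, stated coefficientwise as formal power
series in `q`: for every degree `d`, the coefficient of `q^d` of
`∑_{r₁ ≥ ⋯ ≥ r_m ≥ 0} q^{r₁²+⋯+r_m²}/((q)_{r₁-r₂}⋯(q)_{r_{m-1}-r_m}(q)_{r_m})` equals that
of `(q^{2m+3};q^{2m+3})_∞/(q)_∞ · θ(q^{m+1};q^{2m+3})`, where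
`θ(q^{m+1};q^{2m+3}) = ∏_{j≥0}(1-q^{(2m+3)j+m+1})(1-q^{(2m+3)j+m+2})`.  Tuples with some
`r_i > d` and product factors of degree `> d` contribute nothing to the coefficient of
`q^d`, so both sides are truncated accordingly. -/
theorem andrews_gordon_top (m : ℕ) (hm : 1 ≤ m) (d : ℕ) :
    PowerSeries.coeff (R := ℚ) d
        (∑ r ∈ Finset.univ.filter
            (fun r : Fin m → Fin (d + 1) => ∀ i j : Fin m, i ≤ j → (r j : ℕ) ≤ (r i : ℕ)),
          (PowerSeries.X : PowerSeries ℚ) ^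
              (∑ i ∈ Finset.range m, ((fun k => if h : k < m then (r ⟨k, h⟩ : ℕ) else 0) i) ^ 2) *
            (∏ i ∈ Finset.range m,
              qp ((fun k => if h : k < m then (r ⟨k, h⟩ : ℕ) else 0) i
                  - (fun k => if h : k < m then (r ⟨k, h⟩ : ℕ) else 0) (i + 1)))⁻¹)
      = PowerSeries.coeff (R := ℚ) d
        ((∏ j ∈ Finset.range (d + 1), (1 - (PowerSeries.X : PowerSeries ℚ) ^ ((2 * m + 3) * (j + 1)))) *
          (∏ j ∈ Finset.range (d + 1), (1 - (PowerSeries.X : PowerSeries ℚ) ^ (j + 1)))⁻¹ *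
          ∏ j ∈ Finset.range (d + 1),
            ((1 - (PowerSeries.X : PowerSeries ℚ) ^ ((2 * m + 3) * j + (m + 1))) *
              (1 - (PowerSeries.X : PowerSeries ℚ) ^ ((2 * m + 3) * j + (m + 2))))) := by
  apply Cg.coeff_eq
  have hL : (∑ r ∈ Finset.univ.filter
            (fun r : Fin m → Fin (d + 1) => ∀ i j : Fin m, i ≤ j → (r j : ℕ) ≤ (r i : ℕ)),
          (PowerSeries.X : PowerSeries ℚ) ^
              (∑ i ∈ Finset.range m, ((fun k => if h : k < m then (r ⟨k, h⟩ : ℕ) else 0) i) ^ 2) *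
            (∏ i ∈ Finset.range m,
              qp ((fun k => if h : k < m then (r ⟨k, h⟩ : ℕ) else 0) i
                  - (fun k => if h : k < m then (r ⟨k, h⟩ : ℕ) else 0) (i + 1)))⁻¹)
      = ∑ r ∈ DecrSet m d,
          (PowerSeries.X : PowerSeries ℚ) ^ (∑ i ∈ Finset.range m, (ext m d r i)^2)
            * ∏ i ∈ Finset.range m, ip (ext m d r i - ext m d r (i+1)) := by
    refine Finset.sum_congr rfl fun r _ => ?_
    rw [prod_inv]
    rfl
  have h1 := step1 m d
  have h2 := step2 m d
  have h3 := step3 m d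
  have hA' : qpow ((PowerSeries.X : PowerSeries ℚ)^(2*m+3)) (d+1)
      = ∏ j ∈ Finset.range (d + 1),
          (1 - (PowerSeries.X : PowerSeries ℚ) ^ ((2 * m + 3) * (j + 1))) :=
    Finset.prod_congr rfl fun j _ => by rw [← pow_mul]
  set T := ∑ s ∈ Finset.range (d+1),
    (PowerSeries.X : PowerSeries ℚ) ^ ((m+1)*(s*s)) * al s with hT
  set C' := ∏ j ∈ Finset.range (d + 1),
    ((1 - (PowerSeries.X : PowerSeries ℚ) ^ ((2 * m + 3) * j + (m + 1))) *
      (1 - (PowerSeries.X : PowerSeries ℚ) ^ ((2 * m + 3) * j + (m + 2)))) with hC'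
  have cmid : Cg d (ip d * T) (ip d * (qpow ((PowerSeries.X : PowerSeries ℚ)^(2*m+3)) (d+1) * C')) :=
    (Cg.rfl (d := d) (f := ip d)).mul h3
  have cR : Cg d
      ((∏ j ∈ Finset.range (d + 1), (1 - (PowerSeries.X : PowerSeries ℚ) ^ ((2 * m + 3) * (j + 1)))) *
        (∏ j ∈ Finset.range (d + 1), (1 - (PowerSeries.X : PowerSeries ℚ) ^ (j + 1)))⁻¹ * C')
      (ip d * (qpow ((PowerSeries.X : PowerSeries ℚ)^(2*m+3)) (d+1) * C')) := by
    have e1 : (∏ j ∈ Finset.range (d + 1), (1 - (PowerSeries.X : PowerSeries ℚ) ^ (j + 1)))⁻¹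
        = ip (d+1) := rfl
    rw [e1, ← hA']
    have c := ((Cg.rfl (d := d) (f := qpow ((PowerSeries.X : PowerSeries ℚ)^(2*m+3)) (d+1))).mul
      (cg_ip (by omega : d ≤ d+1) (le_rfl))).mul (Cg.rfl (d := d) (f := C'))
    refine c.trans (Cg.of_eq ?_)
    ring
  exact ((Cg.of_eq hL).trans ((h1.trans h2).trans (cmid.trans cR.symm)))
end
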